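/- arXiv:1711.04750 — 5 statements merged into one kernel-verified Lean document; each statement's English description precedes it below -/
import Mathlib

section
/- For every integer k ≥ 2, every set system 𝒬 ⊆ 𝒫([k]) \ {[k]}, every d ∈ [0,1], and every δ > 0, there exists ε > 0 such that for all sufficiently large n, every n-vertex k-uniform hypergraph H that satisfies DISC_{𝒬,d}(ε) also satisfies WDISC_{𝒬,d}(δ). -/
open Finset
open scoped Classical

/-- `E⃗`: the set of all orderings of the edges of a `k`-uniform hypergraph
with vertex set `Fin n` and edge set `E`. -/
def edgeOrd (k : ℕ) {n : ℕ} (E : Finset (Finset (Fin n))) : Set (Fin k → Fin n) :=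
  {v | Function.Injective v ∧ Finset.image v Finset.univ ∈ E}

/-- The restriction `v_Q` of a `k`-tuple `v` to the coordinates in `Q`. -/
def tupleRestrict {k n : ℕ} (Q : Finset (Fin k)) (v : Fin k → Fin n) :
    {i // i ∈ Q} → Fin n :=
  fun i => v i.1

/-- `𝒦_k(𝒢)`: the ordered `k`-tuples with pairwise distinct entries supported by the
family `G` of `Q`-directed hypergraphs, for `Q` ranging over `𝒬`. -/
def supportedTuples {k n : ℕ} (𝒬 : Finset (Finset (Fin k)))
    (G : (Q : Finset (Fin k)) → Set ({i // i ∈ Q} → Fin n)) : Set (Fin k → Fin n) :=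
  {v | Function.Injective v ∧ ∀ Q ∈ 𝒬, tupleRestrict Q v ∈ G Q}

/-- The property `DISC_{𝒬,d}(ε)` of the `k`-uniform hypergraph on `Fin n` with edge set `E`. -/
def DISC (k n : ℕ) (𝒬 : Finset (Finset (Fin k))) (d ε : ℝ)
    (E : Finset (Finset (Fin n))) : Prop :=
  ∀ G : (Q : Finset (Fin k)) → Set ({i // i ∈ Q} → Fin n),
    |((edgeOrd k E ∩ supportedTuples 𝒬 G).ncard : ℝ) -
        d * ((supportedTuples 𝒬 G).ncard : ℝ)| ≤ ε * (n : ℝ) ^ k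

/-- The product `∏_{Q ∈ 𝒬} w_Q(v_Q)`, where a factor is set to `0` whenever the tuple `v_Q`
has repeated entries. -/
noncomputable def wProd {k n : ℕ} (𝒬 : Finset (Finset (Fin k)))
    (w : (Q : Finset (Fin k)) → (({i // i ∈ Q} → Fin n) → ℝ)) (v : Fin k → Fin n) : ℝ :=
  ∏ Q ∈ 𝒬, if Function.Injective (tupleRestrict Q v) then w Q (tupleRestrict Q v) else 0

/-- The property `WDISC_{𝒬,d}(ε)` of the `k`-uniform hypergraph on `Fin n` with edge set `E`. -/
def WDISC (k n : ℕ) (𝒬 : Finset (Finset (Fin k))) (d ε : ℝ)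
    (E : Finset (Finset (Fin n))) : Prop :=
  ∀ w : (Q : Finset (Fin k)) → (({i // i ∈ Q} → Fin n) → ℝ),
    (∀ Q y, -1 ≤ w Q y ∧ w Q y ≤ 1) →
    |∑ v : Fin k → Fin n,
        ((if v ∈ edgeOrd k E then (1 : ℝ) else 0) - d) * wProd 𝒬 w v| ≤ ε * (n : ℝ) ^ k

/-- `N_F(H)`: the number of labeled copies of the hypergraph `F = (VF, EF)` in the
hypergraph on `Fin n` with edge set `E`. -/
noncomputable def labeledCopies {n : ℕ} (VF : Type) [Fintype VF] [DecidableEq VF]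
    (EF : Finset (Finset VF)) (E : Finset (Finset (Fin n))) : ℕ :=
  Set.ncard {φ : VF → Fin n | Function.Injective φ ∧ ∀ f ∈ EF, Finset.image φ f ∈ E}

/-- The property `CL_{𝒬,d}(F,ε)` for `F = (VF, EF)`. -/
def CL {n : ℕ} (VF : Type) [Fintype VF] [DecidableEq VF]
    (EF : Finset (Finset VF)) (d ε : ℝ) (E : Finset (Finset (Fin n))) : Prop :=
  |(labeledCopies VF EF E : ℝ) - d ^ EF.card * (n : ℝ) ^ Fintype.card VF| ≤
    ε * (n : ℝ) ^ Fintype.card VF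

/-- The hypergraph `F = (VF, EF)` is `𝒬`-simple. -/
def QSimple {k : ℕ} (𝒬 : Finset (Finset (Fin k))) {VF : Type}
    (EF : Finset (Finset VF)) : Prop :=
  ∃ e : Fin EF.card → Finset VF,
    (∀ j, e j ∈ EF) ∧ (∀ f ∈ EF, ∃ j, e j = f) ∧
      ∀ j : Fin EF.card, ∃ x : Fin k → VF,
        Function.Injective x ∧ (∀ r, x r ∈ e j) ∧
          ∀ h : Fin EF.card, h < j →
            ∃ Q ∈ 𝒬, ∀ r : Fin k, x r ∈ e h ∧ x r ∈ e j → r ∈ Q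

/-- The vertex set of `M_𝒬`: the vertex class indexed by `i ∈ [k]` consists of all
functions from `{Q ∈ 𝒬 : i ∉ Q}` to `{0,1}` (this is the result of the successive
doubling operations `db_Q`, `Q ∈ 𝒬`, applied to a single edge `K_k^{(k)}`). -/
abbrev MVertex (k : ℕ) (𝒬 : Finset (Finset (Fin k))) : Type :=
  Σ i : Fin k, ({Q : Finset (Fin k) // Q ∈ 𝒬 ∧ i ∉ Q} → Bool)

/-- The vertex in class `i` of the edge of `M_𝒬` indexed by `a : 𝒬 → {0,1}`. -/
def Mvert {k : ℕ} (𝒬 : Finset (Finset (Fin k))) (a : {Q : Finset (Fin k) // Q ∈ 𝒬} → Bool)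
    (i : Fin k) : MVertex k 𝒬 :=
  ⟨i, fun Q => a ⟨Q.1, Q.2.1⟩⟩

/-- The edge of `M_𝒬` indexed by `a : 𝒬 → {0,1}`. -/
noncomputable def MEdge {k : ℕ} (𝒬 : Finset (Finset (Fin k))) (a : {Q : Finset (Fin k) // Q ∈ 𝒬} → Bool) :
    Finset (MVertex k 𝒬) :=
  Finset.image (Mvert 𝒬 a) Finset.univ

/-- The edge set of `M_𝒬`. -/
noncomputable def MEdges {k : ℕ} (𝒬 : Finset (Finset (Fin k))) : Finset (Finset (MVertex k 𝒬)) :=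
  Finset.image (MEdge 𝒬) Finset.univ

/-- The property `DEV_{𝒬,d}(ε)`:  the sum over all labeled copies `M` of `M_𝒬` in the
complete `k`-uniform hypergraph on `Fin n` of `∏_{f ∈ E(M)} (1_E(f) - d)` is at most
`ε n^{v(M_𝒬)}`. -/
def DEV (k n : ℕ) (𝒬 : Finset (Finset (Fin k))) (d ε : ℝ)
    (E : Finset (Finset (Fin n))) : Prop :=
  ∑ φ ∈ Finset.univ.filter (fun φ : MVertex k 𝒬 → Fin n => Function.Injective φ),
      ∏ f ∈ MEdges 𝒬, ((if Finset.image φ f ∈ E then (1 : ℝ) else 0) - d) ≤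
    ε * (n : ℝ) ^ Fintype.card (MVertex k 𝒬)

/-- `deg_𝒬(i)`: the number of sets in `𝒬` containing `i`. -/
def degQ {k : ℕ} (𝒬 : Finset (Finset (Fin k))) (i : Fin k) : ℕ :=
  (𝒬.filter fun Q => i ∈ Q).card

/-- `𝒜(𝒬)`: the antichain of inclusion-maximal elements of `𝒬`. -/
def maxElems {k : ℕ} (𝒬 : Finset (Finset (Fin k))) : Finset (Finset (Fin k)) :=
  𝒬.filter fun Q => ∀ Q' ∈ 𝒬, Q ⊆ Q' → Q = Q'

/-- The hypergraph `H^{(k)}(ℬ)`: a `k`-set `s ⊆ [n]` is an edge iff the number of `Q ∈ 𝒬`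
such that the restriction of the natural (increasing) ordering of `s` to the positions
in `Q` is an ordering of a member of `ℬ` is odd. -/
noncomputable def HkB (k i : ℕ) {n : ℕ} (𝒬 : Finset (Finset (Fin k))) (ℬ : Finset (Finset (Fin n))) :
    Finset (Finset (Fin n)) :=
  (Finset.powersetCard k (Finset.univ : Finset (Fin n))).filter fun s =>
    if h : s.card = k then
      Odd (𝒬.filter fun Q =>
        Finset.image (fun q : Fin k => (s.orderIsoOfFin h q : Fin n)) Q ∈ ℬ).card
    else False

/-- The `i`-th vertex class of the `Q`-doubling of a `k`-partite hypergraph with vertex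
classes `X`. -/
def dbClass {k : ℕ} (Q : Finset (Fin k)) (X : Fin k → Type) (i : Fin k) : Type :=
  if i ∈ Q then X i else X i × Bool

/-- The vertex of `db_Q(F)` in class `i` arising from the vertex `x` and `a ∈ {0,1}`. -/
def dbVertex {k : ℕ} (Q : Finset (Fin k)) (X : Fin k → Type) (i : Fin k)
    (x : X i) (a : Bool) : dbClass Q X i :=
  if h : i ∈ Q then cast (if_pos h).symm x else cast (if_neg h).symm (x, a)

/-- The edge set of the `Q`-doubling `db_Q(F)` of the `k`-partite `k`-uniform hypergraph
with vertex classes `X` and edge set `E` (edges are recorded as one vertex from each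
class). -/
def dbEdges {k : ℕ} (Q : Finset (Fin k)) (X : Fin k → Type) (E : Set (∀ i, X i)) :
    Set (∀ i, dbClass Q X i) :=
  {y | ∃ e ∈ E, ∃ a : Bool, ∀ i, y i = dbVertex Q X i (e i) a}

noncomputable def pfun (w : ℝ) (b : Bool) : ℝ := if b then (1+w)/2 else (1-w)/2

noncomputable def sgnb (b : Bool) : ℝ := if b then 1 else -1

lemma pfun_nonneg {w : ℝ} (h1 : -1 ≤ w) (h2 : w ≤ 1) (b : Bool) : 0 ≤ pfun w b := by
  cases b <;> simp [pfun] <;> linarith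

lemma abs_sgnb (b : Bool) : |sgnb b| = 1 := by cases b <;> simp [sgnb]

lemma prod_sum_swap {ι : Type*} [Fintype ι] [DecidableEq ι] {F : ι → Type*}
    [∀ i, Fintype (F i)] (g : ∀ i, F i → ℝ) :
    ∏ i, ∑ a, g i a = ∑ σ : ∀ i, F i, ∏ i, g i (σ i) := by
  classical
  rw [Finset.prod_univ_sum (fun _ => Finset.univ) g, Fintype.piFinset_univ]

lemma sum_sgn_prod {Y : Type*} [Fintype Y] [DecidableEq Y] (w : Y → ℝ) (y₀ : Y) :
    ∑ τ : Y → Bool, sgnb (τ y₀) * ∏ y, pfun (w y) (τ y) = w y₀ := by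
  have key : ∀ τ : Y → Bool, sgnb (τ y₀) * ∏ y, pfun (w y) (τ y)
      = ∏ y, ((if y = y₀ then sgnb (τ y) else 1) * pfun (w y) (τ y)) := by
    intro τ
    rw [Finset.prod_mul_distrib, Finset.prod_ite_eq' Finset.univ y₀ (fun y => sgnb (τ y))]
    simp
  simp_rw [key]
  rw [← prod_sum_swap (fun y b => (if y = y₀ then sgnb b else 1) * pfun (w y) b)]
  have h2 : ∀ y : Y, (∑ b : Bool, (if y = y₀ then sgnb b else 1) * pfun (w y) b)
      = if y = y₀ then w y else 1 := by
    intro y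
    by_cases h : y = y₀ <;> simp [h, Fintype.sum_bool, sgnb, pfun] <;> ring
  simp_rw [h2]
  rw [Finset.prod_ite_eq' Finset.univ y₀ w]
  simp

lemma sum_pfun_prod {Y : Type*} [Fintype Y] [DecidableEq Y] (w : Y → ℝ) :
    ∑ τ : Y → Bool, ∏ y, pfun (w y) (τ y) = 1 := by
  rw [← prod_sum_swap (fun y b => pfun (w y) b)]
  apply Finset.prod_eq_one
  intro y _
  rw [Fintype.sum_bool]
  simp [pfun]; ring

lemma ncard_eq_sum {α : Type*} [Fintype α] (S : Set α) :
    (S.ncard : ℝ) = ∑ v, if v ∈ S then (1:ℝ) else 0 := by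
  classical
  rw [Finset.sum_boole, ← Nat.card_coe_set_eq, Nat.card_eq_fintype_card,
    Fintype.card_subtype]

lemma fiber_card (k n : ℕ) {i j : Fin k} (hij : i ≠ j) :
    (Finset.univ.filter fun v : Fin k → Fin n => v i = v j).card ≤ n ^ (k-1) := by
  classical
  have hinj : Set.InjOn (fun (v : Fin k → Fin n) (x : {x : Fin k // x ≠ j}) => v x.1)
      ↑(Finset.univ.filter fun v : Fin k → Fin n => v i = v j) := by
    intro v hv v' hv' h
    simp only [Finset.coe_filter, Set.mem_setOf_eq, Finset.mem_univ, true_and] at hv hv'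
    funext x
    by_cases hx : x = j
    · subst hx
      have h1 := congrFun h ⟨i, hij⟩
      simp only at h1
      rw [← hv, ← hv', h1]
    · exact congrFun h ⟨x, hx⟩
  have hcard := Finset.card_le_card_of_injOn _ (fun v _ => Finset.mem_univ _) hinj
  calc (Finset.univ.filter fun v : Fin k → Fin n => v i = v j).card
      ≤ (Finset.univ : Finset ({x : Fin k // x ≠ j} → Fin n)).card := hcard
    _ = n ^ (k-1) := by
        rw [Finset.card_univ, Fintype.card_fun]
        congr 1
        · simp
        · have : Fintype.card {x : Fin k // x ≠ j} = k - 1 := by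
            rw [Fintype.card_subtype_compl, Fintype.card_subtype_eq, Fintype.card_fin]
          simp [this]

lemma noninj_card_nat (k n : ℕ) :
    (Finset.univ.filter fun v : Fin k → Fin n => ¬ Function.Injective v).card
      ≤ k * k * n ^ (k-1) := by
  classical
  have hsub : (Finset.univ.filter fun v : Fin k → Fin n => ¬ Function.Injective v)
      ⊆ (Finset.univ.filter fun p : Fin k × Fin k => p.1 ≠ p.2).biUnion
        (fun p => Finset.univ.filter fun v : Fin k → Fin n => v p.1 = v p.2) := by
    intro v hv
    simp only [Finset.mem_filter, Finset.mem_univ, true_and] at hv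
    rw [Function.Injective] at hv; push_neg at hv
    obtain ⟨a, b, hab, hne⟩ := hv
    simp only [Finset.mem_biUnion, Finset.mem_filter, Finset.mem_univ, true_and]
    exact ⟨(a,b), hne, hab⟩
  calc (Finset.univ.filter fun v : Fin k → Fin n => ¬ Function.Injective v).card
      ≤ _ := Finset.card_le_card hsub
    _ ≤ ∑ p ∈ (Finset.univ.filter fun p : Fin k × Fin k => p.1 ≠ p.2),
          (Finset.univ.filter fun v : Fin k → Fin n => v p.1 = v p.2).card :=
        Finset.card_biUnion_le
    _ ≤ ∑ _p ∈ (Finset.univ.filter fun p : Fin k × Fin k => p.1 ≠ p.2), n^(k-1) := by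
        apply Finset.sum_le_sum; intro p hp
        exact fiber_card k n (by simpa using (Finset.mem_filter.mp hp).2)
    _ ≤ k * k * n ^ (k-1) := by
        rw [Finset.sum_const, smul_eq_mul]
        gcongr
        calc (Finset.univ.filter fun p : Fin k × Fin k => p.1 ≠ p.2).card
            ≤ (Finset.univ : Finset (Fin k × Fin k)).card := Finset.card_filter_le _ _
          _ = k * k := by simp

lemma wprod_of_inj {k n : ℕ} (𝒬 : Finset (Finset (Fin k)))
    (w : (Q : Finset (Fin k)) → (({i // i ∈ Q} → Fin n) → ℝ)) {v : Fin k → Fin n}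
    (hv : Function.Injective v) :
    wProd 𝒬 w v = ∏ Q ∈ 𝒬, w Q (tupleRestrict Q v) := by
  apply Finset.prod_congr rfl
  intro Q _
  rw [if_pos]
  intro x y h
  exact Subtype.ext (hv h)

lemma wprod_abs_le_one {k n : ℕ} (𝒬 : Finset (Finset (Fin k)))
    (w : (Q : Finset (Fin k)) → (({i // i ∈ Q} → Fin n) → ℝ))
    (hw : ∀ Q y, -1 ≤ w Q y ∧ w Q y ≤ 1) (v : Fin k → Fin n) :
    |wProd 𝒬 w v| ≤ 1 := by
  rw [wProd, Finset.abs_prod]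
  apply Finset.prod_le_one
  · intro Q _; exact abs_nonneg _
  · intro Q _
    split
    · rw [abs_le]; exact hw Q _
    · simp

lemma disc_sum {k n : ℕ} {𝒬 : Finset (Finset (Fin k))} {d ε : ℝ}
    {E : Finset (Finset (Fin n))} (hdisc : DISC k n 𝒬 d ε E)
    (G : (Q : Finset (Fin k)) → Set ({i // i ∈ Q} → Fin n)) :
    |∑ v : Fin k → Fin n, ((if v ∈ edgeOrd k E then (1:ℝ) else 0) - d) *
      (if v ∈ supportedTuples 𝒬 G then (1:ℝ) else 0)| ≤ ε * (n:ℝ)^k := by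
  have h := hdisc G
  have e1 : ∑ v : Fin k → Fin n, ((if v ∈ edgeOrd k E then (1:ℝ) else 0) - d) *
      (if v ∈ supportedTuples 𝒬 G then (1:ℝ) else 0)
      = ((edgeOrd k E ∩ supportedTuples 𝒬 G).ncard : ℝ)
        - d * ((supportedTuples 𝒬 G).ncard : ℝ) := by
    rw [ncard_eq_sum, ncard_eq_sum, Finset.mul_sum, ← Finset.sum_sub_distrib]
    apply Finset.sum_congr rfl
    intro v _
    by_cases h1 : v ∈ edgeOrd k E <;> by_cases h2 : v ∈ supportedTuples 𝒬 G <;>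
      simp [h1, h2, Set.mem_inter_iff]
  rw [e1]
  exact h

lemma wprod_decomp {k n : ℕ} (𝒬 : Finset (Finset (Fin k)))
    (w : (Q : Finset (Fin k)) → (({i // i ∈ Q} → Fin n) → ℝ)) (v : Fin k → Fin n) :
    ∏ Q ∈ 𝒬, w Q (tupleRestrict Q v)
      = ∑ σ : (Q : {Q // Q ∈ 𝒬}) → (({i // i ∈ Q.1} → Fin n) → Bool),
          (∏ Q : {Q // Q ∈ 𝒬}, ∏ y, pfun (w Q.1 y) (σ Q y)) *
            ∏ Q : {Q // Q ∈ 𝒬}, sgnb (σ Q (tupleRestrict Q.1 v)) := by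
  classical
  rw [← Finset.prod_coe_sort 𝒬 (fun Q => w Q (tupleRestrict Q v))]
  have key : ∀ Q : {Q // Q ∈ 𝒬}, w Q.1 (tupleRestrict Q.1 v)
      = ∑ τ : ({i // i ∈ Q.1} → Fin n) → Bool,
          sgnb (τ (tupleRestrict Q.1 v)) * ∏ y, pfun (w Q.1 y) (τ y) := fun Q =>
    (sum_sgn_prod _ _).symm
  rw [Finset.prod_congr rfl (fun Q _ => key Q)]
  rw [prod_sum_swap]
  apply Finset.sum_congr rfl
  intro σ _
  rw [Finset.prod_mul_distrib, mul_comm]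


lemma claimC {k n : ℕ} (𝒬 : Finset (Finset (Fin k))) {d ε : ℝ}
    {E : Finset (Finset (Fin n))} (hdisc : DISC k n 𝒬 d ε E)
    (σ : (Q : {Q // Q ∈ 𝒬}) → (({i // i ∈ Q.1} → Fin n) → Bool)) :
    |∑ v ∈ Finset.univ.filter (fun v : Fin k → Fin n => Function.Injective v),
        ((if v ∈ edgeOrd k E then (1:ℝ) else 0) - d) *
          ∏ Q : {Q // Q ∈ 𝒬}, sgnb (σ Q (tupleRestrict Q.1 v))|
      ≤ 2 ^ 𝒬.card * (ε * (n:ℝ)^k) := by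
  classical
  set G : ({Q // Q ∈ 𝒬} → Bool) → (Q : Finset (Fin k)) → Set ({i // i ∈ Q} → Fin n) :=
    fun η Q => if h : Q ∈ 𝒬 then {y | σ ⟨Q, h⟩ y = η ⟨Q, h⟩} else Set.univ with hG
  have step1 : ∀ v : Fin k → Fin n,
      (∏ Q : {Q // Q ∈ 𝒬}, sgnb (σ Q (tupleRestrict Q.1 v)))
      = ∑ η : {Q // Q ∈ 𝒬} → Bool,
          (∏ Q : {Q // Q ∈ 𝒬}, sgnb (η Q)) *
            ∏ Q : {Q // Q ∈ 𝒬}, (if σ Q (tupleRestrict Q.1 v) = η Q then (1:ℝ) else 0) := by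
    intro v
    have e0 : ∀ Q : {Q // Q ∈ 𝒬}, sgnb (σ Q (tupleRestrict Q.1 v))
        = ∑ b : Bool, (if σ Q (tupleRestrict Q.1 v) = b then sgnb b else 0) := by
      intro Q
      rw [Fintype.sum_bool]
      cases h : σ Q (tupleRestrict Q.1 v) <;> simp [h]
    rw [Finset.prod_congr rfl (fun Q _ => e0 Q),
      prod_sum_swap (fun (Q : {Q // Q ∈ 𝒬}) (b : Bool) =>
        if σ Q (tupleRestrict Q.1 v) = b then sgnb b else 0)]
    apply Finset.sum_congr rfl
    intro η _
    rw [← Finset.prod_mul_distrib]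
    apply Finset.prod_congr rfl
    intro Q _
    by_cases h : σ Q (tupleRestrict Q.1 v) = η Q <;> simp [h]
  have step3 : ∀ (η : {Q // Q ∈ 𝒬} → Bool) (v : Fin k → Fin n), Function.Injective v →
      (∏ Q : {Q // Q ∈ 𝒬}, (if σ Q (tupleRestrict Q.1 v) = η Q then (1:ℝ) else 0))
      = if v ∈ supportedTuples 𝒬 (G η) then (1:ℝ) else 0 := by
    intro η v hv
    rw [Finset.prod_boole]
    have hiff : (∀ Q ∈ (Finset.univ : Finset {Q // Q ∈ 𝒬}),
        σ Q (tupleRestrict Q.1 v) = η Q) ↔ v ∈ supportedTuples 𝒬 (G η) := by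
      constructor
      · intro hall
        refine ⟨hv, fun Q hQ => ?_⟩
        have h1 := hall ⟨Q, hQ⟩ (Finset.mem_univ _)
        simp only [hG, dif_pos hQ, Set.mem_setOf_eq]
        exact h1
      · rintro ⟨-, h2⟩ Q -
        have h3 := h2 Q.1 Q.2
        simp only [hG, dif_pos Q.2, Set.mem_setOf_eq] at h3
        exact h3
    simp only [hiff]
  have main : ∑ v ∈ Finset.univ.filter (fun v : Fin k → Fin n => Function.Injective v),
        ((if v ∈ edgeOrd k E then (1:ℝ) else 0) - d) *
          ∏ Q : {Q // Q ∈ 𝒬}, sgnb (σ Q (tupleRestrict Q.1 v))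
      = ∑ η : {Q // Q ∈ 𝒬} → Bool, (∏ Q : {Q // Q ∈ 𝒬}, sgnb (η Q)) *
          ∑ v : Fin k → Fin n, ((if v ∈ edgeOrd k E then (1:ℝ) else 0) - d) *
            (if v ∈ supportedTuples 𝒬 (G η) then (1:ℝ) else 0) := by
    simp_rw [step1, Finset.mul_sum]
    rw [Finset.sum_comm]
    apply Finset.sum_congr rfl
    intro η _
    have e2 : ∀ v ∈ Finset.univ.filter (fun v : Fin k → Fin n => Function.Injective v),
        ((if v ∈ edgeOrd k E then (1:ℝ) else 0) - d) *
          ((∏ Q : {Q // Q ∈ 𝒬}, sgnb (η Q)) *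
            ∏ Q : {Q // Q ∈ 𝒬}, (if σ Q (tupleRestrict Q.1 v) = η Q then (1:ℝ) else 0))
        = (∏ Q : {Q // Q ∈ 𝒬}, sgnb (η Q)) *
            (((if v ∈ edgeOrd k E then (1:ℝ) else 0) - d) *
              (if v ∈ supportedTuples 𝒬 (G η) then (1:ℝ) else 0)) := by
      intro v hv
      have hvi : Function.Injective v := by simpa using (Finset.mem_filter.mp hv).2
      rw [step3 η v hvi]
      ring
    rw [Finset.sum_congr rfl e2]
    apply Finset.sum_subset (Finset.subset_univ _)
    intro v _ hv
    simp only [Finset.mem_filter, Finset.mem_univ, true_and] at hv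
    have hns : v ∉ supportedTuples 𝒬 (G η) := fun hmem => hv hmem.1
    simp [hns]
  rw [main]
  calc |∑ η : {Q // Q ∈ 𝒬} → Bool, (∏ Q : {Q // Q ∈ 𝒬}, sgnb (η Q)) *
          ∑ v : Fin k → Fin n, ((if v ∈ edgeOrd k E then (1:ℝ) else 0) - d) *
            (if v ∈ supportedTuples 𝒬 (G η) then (1:ℝ) else 0)|
      ≤ ∑ η : {Q // Q ∈ 𝒬} → Bool, |(∏ Q : {Q // Q ∈ 𝒬}, sgnb (η Q)) *
          ∑ v : Fin k → Fin n, ((if v ∈ edgeOrd k E then (1:ℝ) else 0) - d) *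
            (if v ∈ supportedTuples 𝒬 (G η) then (1:ℝ) else 0)| :=
        Finset.abs_sum_le_sum_abs _ _
    _ ≤ ∑ _η : {Q // Q ∈ 𝒬} → Bool, ε * (n:ℝ)^k := by
        apply Finset.sum_le_sum
        intro η _
        rw [abs_mul]
        have h1 : |∏ Q : {Q // Q ∈ 𝒬}, sgnb (η Q)| = 1 := by
          rw [Finset.abs_prod]
          apply Finset.prod_eq_one
          intro Q _
          exact abs_sgnb _
        rw [h1, one_mul]
        exact disc_sum hdisc (G η)
    _ = 2 ^ 𝒬.card * (ε * (n:ℝ)^k) := by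
        rw [Finset.sum_const, Finset.card_univ, Fintype.card_fun, nsmul_eq_mul]
        push_cast
        simp [Fintype.card_coe]

/-- `DISC ⟹ WDISC`. -/
theorem disc_implies_wdisc (k : ℕ) (hk : 2 ≤ k) (𝒬 : Finset (Finset (Fin k)))
    (h𝒬 : Finset.univ ∉ 𝒬) (d : ℝ) (hd0 : 0 ≤ d) (hd1 : d ≤ 1) (δ : ℝ) (hδ : 0 < δ) :
    ∃ ε > (0 : ℝ), ∃ n₀ : ℕ, ∀ n ≥ n₀, ∀ E : Finset (Finset (Fin n)),
      (∀ e ∈ E, e.card = k) → DISC k n 𝒬 d ε E → WDISC k n 𝒬 d δ E := by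
  classical
  refine ⟨δ / (2 * 2 ^ 𝒬.card), by positivity, ⌈2 * (k:ℝ)^2 / δ⌉₊ + 1, ?_⟩
  intro n hn E hEcard hdisc w hw
  have h2pos : (0:ℝ) < 2 ^ 𝒬.card := by positivity
  have hn0 : (0:ℝ) < n := by
    have h1 : 1 ≤ n := le_trans (Nat.le_add_left 1 _) hn
    exact_mod_cast h1
  have hnR : 2 * (k:ℝ)^2 / δ ≤ (n:ℝ) := by
    calc 2*(k:ℝ)^2/δ ≤ (⌈2*(k:ℝ)^2/δ⌉₊ : ℝ) := Nat.le_ceil _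
      _ ≤ (n:ℝ) := by exact_mod_cast Nat.le_of_succ_le hn
  have hPnonneg : ∀ σ : (Q : {Q // Q ∈ 𝒬}) → (({i // i ∈ Q.1} → Fin n) → Bool),
      0 ≤ ∏ Q : {Q // Q ∈ 𝒬}, ∏ y, pfun (w Q.1 y) (σ Q y) := by
    intro σ
    apply Finset.prod_nonneg
    intro Q _
    apply Finset.prod_nonneg
    intro y _
    exact pfun_nonneg (hw Q.1 y).1 (hw Q.1 y).2 _
  have hPsum : ∑ σ : (Q : {Q // Q ∈ 𝒬}) → (({i // i ∈ Q.1} → Fin n) → Bool),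
      ∏ Q : {Q // Q ∈ 𝒬}, ∏ y, pfun (w Q.1 y) (σ Q y) = 1 := by
    rw [← prod_sum_swap (fun (Q : {Q // Q ∈ 𝒬}) (τ : ({i // i ∈ Q.1} → Fin n) → Bool) =>
      ∏ y, pfun (w Q.1 y) (τ y))]
    apply Finset.prod_eq_one
    intro Q _
    exact sum_pfun_prod _
  have hinjpart : |∑ v ∈ Finset.univ.filter (fun v : Fin k → Fin n => Function.Injective v),
      ((if v ∈ edgeOrd k E then (1:ℝ) else 0) - d) * wProd 𝒬 w v| ≤ (δ/2) * (n:ℝ)^k := by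
    have e : ∑ v ∈ Finset.univ.filter (fun v : Fin k → Fin n => Function.Injective v),
        ((if v ∈ edgeOrd k E then (1:ℝ) else 0) - d) * wProd 𝒬 w v
        = ∑ σ : (Q : {Q // Q ∈ 𝒬}) → (({i // i ∈ Q.1} → Fin n) → Bool),
            (∏ Q : {Q // Q ∈ 𝒬}, ∏ y, pfun (w Q.1 y) (σ Q y)) *
              ∑ v ∈ Finset.univ.filter (fun v : Fin k → Fin n => Function.Injective v),
                ((if v ∈ edgeOrd k E then (1:ℝ) else 0) - d) *
                  ∏ Q : {Q // Q ∈ 𝒬}, sgnb (σ Q (tupleRestrict Q.1 v)) := by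
      have e1 : ∀ v ∈ Finset.univ.filter (fun v : Fin k → Fin n => Function.Injective v),
          ((if v ∈ edgeOrd k E then (1:ℝ) else 0) - d) * wProd 𝒬 w v
          = ∑ σ : (Q : {Q // Q ∈ 𝒬}) → (({i // i ∈ Q.1} → Fin n) → Bool),
              ((if v ∈ edgeOrd k E then (1:ℝ) else 0) - d) *
                ((∏ Q : {Q // Q ∈ 𝒬}, ∏ y, pfun (w Q.1 y) (σ Q y)) *
                  ∏ Q : {Q // Q ∈ 𝒬}, sgnb (σ Q (tupleRestrict Q.1 v))) := by
        intro v hv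
        have hvi : Function.Injective v := by
          simpa using (Finset.mem_filter.mp hv).2
        rw [wprod_of_inj 𝒬 w hvi, wprod_decomp 𝒬 w v, Finset.mul_sum]
      rw [Finset.sum_congr rfl e1, Finset.sum_comm]
      apply Finset.sum_congr rfl
      intro σ _
      rw [Finset.mul_sum]
      apply Finset.sum_congr rfl
      intro v _
      ring
    rw [e]
    calc |∑ σ : (Q : {Q // Q ∈ 𝒬}) → (({i // i ∈ Q.1} → Fin n) → Bool),
            (∏ Q : {Q // Q ∈ 𝒬}, ∏ y, pfun (w Q.1 y) (σ Q y)) *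
              ∑ v ∈ Finset.univ.filter (fun v : Fin k → Fin n => Function.Injective v),
                ((if v ∈ edgeOrd k E then (1:ℝ) else 0) - d) *
                  ∏ Q : {Q // Q ∈ 𝒬}, sgnb (σ Q (tupleRestrict Q.1 v))|
        ≤ ∑ σ : (Q : {Q // Q ∈ 𝒬}) → (({i // i ∈ Q.1} → Fin n) → Bool),
            |(∏ Q : {Q // Q ∈ 𝒬}, ∏ y, pfun (w Q.1 y) (σ Q y)) *
              ∑ v ∈ Finset.univ.filter (fun v : Fin k → Fin n => Function.Injective v),
                ((if v ∈ edgeOrd k E then (1:ℝ) else 0) - d) *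
                  ∏ Q : {Q // Q ∈ 𝒬}, sgnb (σ Q (tupleRestrict Q.1 v))| :=
          Finset.abs_sum_le_sum_abs _ _
      _ ≤ ∑ σ : (Q : {Q // Q ∈ 𝒬}) → (({i // i ∈ Q.1} → Fin n) → Bool),
            (∏ Q : {Q // Q ∈ 𝒬}, ∏ y, pfun (w Q.1 y) (σ Q y)) *
              (2 ^ 𝒬.card * ((δ / (2 * 2 ^ 𝒬.card)) * (n:ℝ)^k)) := by
          apply Finset.sum_le_sum
          intro σ _
          rw [abs_mul, abs_of_nonneg (hPnonneg σ)]
          exact mul_le_mul_of_nonneg_left (claimC 𝒬 hdisc σ) (hPnonneg σ)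
      _ = (δ/2) * (n:ℝ)^k := by
          rw [← Finset.sum_mul, hPsum, one_mul]
          field_simp
  have hnoninj : |∑ v ∈ Finset.univ.filter
        (fun v : Fin k → Fin n => ¬ Function.Injective v),
      ((if v ∈ edgeOrd k E then (1:ℝ) else 0) - d) * wProd 𝒬 w v| ≤ (δ/2) * (n:ℝ)^k := by
    calc |∑ v ∈ Finset.univ.filter (fun v : Fin k → Fin n => ¬ Function.Injective v),
          ((if v ∈ edgeOrd k E then (1:ℝ) else 0) - d) * wProd 𝒬 w v|
        ≤ ∑ v ∈ Finset.univ.filter (fun v : Fin k → Fin n => ¬ Function.Injective v),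
          |((if v ∈ edgeOrd k E then (1:ℝ) else 0) - d) * wProd 𝒬 w v| :=
          Finset.abs_sum_le_sum_abs _ _
      _ ≤ ∑ _v ∈ Finset.univ.filter (fun v : Fin k → Fin n => ¬ Function.Injective v),
            (1:ℝ) := by
          apply Finset.sum_le_sum
          intro v hv
          have hvnl : ¬ Function.Injective v := by
            simpa using (Finset.mem_filter.mp hv).2
          have hne : v ∉ edgeOrd k E := fun h => hvnl h.1
          have hfv : |(if v ∈ edgeOrd k E then (1:ℝ) else 0) - d| ≤ 1 := by
            rw [if_neg hne]
            rw [abs_le]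
            constructor <;> linarith
          rw [abs_mul]
          calc |(if v ∈ edgeOrd k E then (1:ℝ) else 0) - d| * |wProd 𝒬 w v|
              ≤ 1 * 1 := mul_le_mul hfv (wprod_abs_le_one 𝒬 w hw v) (abs_nonneg _)
                zero_le_one
            _ = 1 := one_mul 1
      _ = ((Finset.univ.filter (fun v : Fin k → Fin n => ¬ Function.Injective v)).card : ℝ) := by
          rw [Finset.sum_const, nsmul_eq_mul, mul_one]
      _ ≤ (k:ℝ) * (k:ℝ) * (n:ℝ)^(k-1) := by
          have := noninj_card_nat k n
          calc ((Finset.univ.filter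
                (fun v : Fin k → Fin n => ¬ Function.Injective v)).card : ℝ)
              ≤ ((k * k * n ^ (k-1) : ℕ) : ℝ) := by exact_mod_cast this
            _ = (k:ℝ) * (k:ℝ) * (n:ℝ)^(k-1) := by push_cast; ring
      _ ≤ (δ/2) * (n:ℝ)^k := by
          have hkk : (k:ℝ) * (k:ℝ) ≤ (δ/2) * (n:ℝ) := by
            rw [div_le_iff₀ hδ] at hnR
            nlinarith
          have hpow : (n:ℝ)^k = (n:ℝ)^(k-1) * (n:ℝ) := by
            rw [← pow_succ]
            congr 1
            omega
          rw [hpow]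
          calc (k:ℝ) * (k:ℝ) * (n:ℝ)^(k-1) ≤ ((δ/2) * (n:ℝ)) * (n:ℝ)^(k-1) := by
                apply mul_le_mul_of_nonneg_right hkk
                positivity
            _ = (δ/2) * ((n:ℝ)^(k-1) * (n:ℝ)) := by ring
  rw [← Finset.sum_filter_add_sum_filter_not Finset.univ
    (fun v : Fin k → Fin n => Function.Injective v)]
  calc |∑ v ∈ Finset.univ.filter (fun v : Fin k → Fin n => Function.Injective v),
          ((if v ∈ edgeOrd k E then (1:ℝ) else 0) - d) * wProd 𝒬 w v
        + ∑ v ∈ Finset.univ.filter (fun v : Fin k → Fin n => ¬ Function.Injective v),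
          ((if v ∈ edgeOrd k E then (1:ℝ) else 0) - d) * wProd 𝒬 w v|
      ≤ |∑ v ∈ Finset.univ.filter (fun v : Fin k → Fin n => Function.Injective v),
          ((if v ∈ edgeOrd k E then (1:ℝ) else 0) - d) * wProd 𝒬 w v|
        + |∑ v ∈ Finset.univ.filter (fun v : Fin k → Fin n => ¬ Function.Injective v),
          ((if v ∈ edgeOrd k E then (1:ℝ) else 0) - d) * wProd 𝒬 w v| := abs_add_le _ _
    _ ≤ (δ/2) * (n:ℝ)^k + (δ/2) * (n:ℝ)^k := add_le_add hinjpart hnoninj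
    _ = δ * (n:ℝ)^k := by ring
end

section
/- For every integer k ≥ 2, every set system 𝒬 ⊆ 𝒫([k]) \ {[k]}, every d ∈ [0,1], every 𝒬-simple k-uniform hypergraph F, and every δ > 0, there exists ε > 0 such that for all sufficiently large n, every n-vertex k-uniform hypergraph H that satisfies WDISC_{𝒬,d}(ε) also satisfies CL_{𝒬,d}(F,δ). -/
open Finset
open scoped Classical

lemma card_noninj (α : Type) [Fintype α] [DecidableEq α] (n : ℕ) :
    ((univ : Finset (α → Fin n)).filter fun f => ¬ Function.Injective f).card ≤
      (Fintype.card α)^2 * n^(Fintype.card α - 1) := by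
  classical
  have hsub : ((univ : Finset (α → Fin n)).filter fun f => ¬ Function.Injective f) ⊆
      (univ : Finset α).offDiag.biUnion
        (fun p => univ.filter fun f : α → Fin n => f p.1 = f p.2) := by
    intro f hf
    rw [mem_filter, Function.Injective] at hf
    push_neg at hf
    obtain ⟨a, b, hab, hne⟩ := hf.2
    exact mem_biUnion.2 ⟨(a, b), by simp [Finset.mem_offDiag, hne], by simp [hab]⟩
  have hpair : ∀ p : α × α, p ∈ (univ : Finset α).offDiag →
      (univ.filter fun f : α → Fin n => f p.1 = f p.2).card ≤ n ^ (Fintype.card α - 1) := by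
    rintro ⟨a, b⟩ hp
    have hab : a ≠ b := by
      simp [Finset.mem_offDiag] at hp; exact hp
    have h1 : (univ.filter fun f : α → Fin n => f a = f b).card ≤
        Fintype.card ({x : α // x ≠ b} → Fin n) := by
      rw [← Finset.card_univ]
      apply Finset.card_le_card_of_injOn (fun f => fun x => f x.1) (fun _ _ => mem_univ _)
      intro f hf g hg hfg
      simp only [mem_coe, mem_filter] at hf hg
      funext x
      by_cases hx : x = b
      · subst hx
        have h1 : f a = g a := congrFun hfg ⟨a, hab⟩
        rw [← hf.2, ← hg.2, h1]
      · exact congrFun hfg ⟨x, hx⟩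
    refine h1.trans ?_
    rw [Fintype.card_fun, Fintype.card_fin]
    have : Fintype.card {x : α // x ≠ b} = Fintype.card α - 1 := by
      have := Fintype.card_subtype_compl (fun x : α => x = b)
      simp only [Fintype.card_subtype_eq] at this
      exact this
    rw [this]
  calc ((univ : Finset (α → Fin n)).filter fun f => ¬ Function.Injective f).card
      ≤ _ := Finset.card_le_card hsub
    _ ≤ ∑ p ∈ (univ : Finset α).offDiag, (univ.filter fun f : α → Fin n => f p.1 = f p.2).card :=
        Finset.card_biUnion_le
    _ ≤ ∑ _p ∈ (univ : Finset α).offDiag, n ^ (Fintype.card α - 1) :=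
        Finset.sum_le_sum hpair
    _ = (univ : Finset α).offDiag.card * n ^ (Fintype.card α - 1) := by
        rw [Finset.sum_const, smul_eq_mul]
    _ ≤ (Fintype.card α)^2 * n^(Fintype.card α - 1) := by
        apply Nat.mul_le_mul_right
        calc (univ : Finset α).offDiag.card ≤ (univ : Finset (α × α)).card :=
            Finset.card_le_card (Finset.subset_univ _)
          _ = (Fintype.card α)^2 := by simp [Finset.card_univ, sq]

lemma telescope (m : ℕ) (d : ℝ) (a : ℕ → ℝ) :
    ∏ h ∈ range m, a h - d ^ m =
      ∑ i ∈ range m, (∏ h ∈ range i, a h) * (a i - d) * d ^ (m - 1 - i) := by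
  induction m with
  | zero => simp
  | succ m ih =>
    rw [Finset.sum_range_succ, Finset.prod_range_succ]
    have key : ∀ i ∈ range m, (∏ h ∈ range i, a h) * (a i - d) * d ^ (m + 1 - 1 - i) =
        ((∏ h ∈ range i, a h) * (a i - d) * d ^ (m - 1 - i)) * d := by
      intro i hi
      have hi' : i < m := Finset.mem_range.1 hi
      have : m + 1 - 1 - i = (m - 1 - i) + 1 := by omega
      rw [this, pow_succ]; ring
    rw [Finset.sum_congr rfl key, ← Finset.sum_mul, ← ih]
    simp only [Nat.add_sub_cancel, Nat.sub_self, pow_zero]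
    ring
noncomputable def edgeInd {n : ℕ} (E : Finset (Finset (Fin n))) {VF : Type} (f : Finset VF)
    (φ : VF → Fin n) : ℝ :=
  if Set.InjOn φ ↑f ∧ Finset.image φ f ∈ E then 1 else 0

lemma edgeInd_nonneg {n : ℕ} (E : Finset (Finset (Fin n))) {VF : Type} (f : Finset VF)
    (φ : VF → Fin n) : 0 ≤ edgeInd E f φ := by
  unfold edgeInd; split <;> norm_num

lemma edgeInd_le_one {n : ℕ} (E : Finset (Finset (Fin n))) {VF : Type} (f : Finset VF)
    (φ : VF → Fin n) : edgeInd E f φ ≤ 1 := by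
  unfold edgeInd; split <;> norm_num

lemma edgeInd_congr {n : ℕ} (E : Finset (Finset (Fin n))) {VF : Type} (f : Finset VF)
    {φ φ' : VF → Fin n} (h : ∀ u ∈ f, φ u = φ' u) : edgeInd E f φ = edgeInd E f φ' := by
  unfold edgeInd
  have h1 : Set.InjOn φ ↑f ↔ Set.InjOn φ' ↑f := by
    constructor <;> intro hi u hu u' hu' he <;>
      [ exact hi hu hu' (by rw [h u (by exact_mod_cast hu), h u' (by exact_mod_cast hu')]; exact he);
        exact hi hu hu' (by rw [← h u (by exact_mod_cast hu), ← h u' (by exact_mod_cast hu')]; exact he)]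
  have h2 : Finset.image φ f = Finset.image φ' f := Finset.image_congr h
  exact if_congr (and_congr h1 (by rw [h2])) rfl rfl

lemma core_disc (k n : ℕ) (hn : 0 < n) (𝒬 : Finset (Finset (Fin k))) (d ε : ℝ)
    (hd0 : 0 ≤ d) (hd1 : d ≤ 1)
    (E : Finset (Finset (Fin n))) (hW : WDISC k n 𝒬 d ε E)
    (VF : Type) [Fintype VF] [DecidableEq VF]
    (ι : Type) [Fintype ι] (g : ι → Finset VF)
    (fi : Finset VF) (x : Fin k → VF) (hx : Function.Injective x)
    (hxmem : ∀ r, x r ∈ fi) (hficard : fi.card = k)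
    (c : ι → Finset (Fin k)) (hc : ∀ h, c h ∈ 𝒬)
    (hcQ : ∀ h r, x r ∈ g h → r ∈ c h) :
    |∑ φ : VF → Fin n, (∏ h : ι, edgeInd E (g h) φ) * (edgeInd E fi φ - d)| ≤
      (ε * (n:ℝ)^k + (k:ℝ)^2 * (n:ℝ)^(k-1)) * (n:ℝ)^(Fintype.card VF - k) := by
  classical
  -- the bijection between `Fin k` and `fi`
  have hbij : Function.Bijective (fun r : Fin k => (⟨x r, hxmem r⟩ : {u // u ∈ fi})) := by
    rw [Fintype.bijective_iff_injective_and_card]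
    constructor
    · intro r s hrs
      exact hx (congrArg Subtype.val hrs)
    · simp [Fintype.card_coe, hficard]
  let xe : Fin k ≃ {u // u ∈ fi} := Equiv.ofBijective _ hbij
  have hxe : ∀ r, (xe r : VF) = x r := fun r => rfl
  -- combine
  let combine : (Fin k → Fin n) → ({u : VF // u ∉ fi} → Fin n) → VF → Fin n :=
    fun v ψ u => if h : u ∈ fi then v (xe.symm ⟨u, h⟩) else ψ ⟨u, h⟩
  have hcomb_x : ∀ v ψ r, combine v ψ (x r) = v r := by
    intro v ψ r
    have h : x r ∈ fi := hxmem r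
    simp only [combine, dif_pos h]
    congr 1
    have : (⟨x r, h⟩ : {u // u ∈ fi}) = xe r := rfl
    rw [this, Equiv.symm_apply_apply]
  have hcomb_mem : ∀ v ψ (u : VF) (h : u ∈ fi), combine v ψ u = v (xe.symm ⟨u, h⟩) := by
    intro v ψ u h; simp only [combine, dif_pos h]
  have hx_symm : ∀ (u : VF) (h : u ∈ fi), x (xe.symm ⟨u, h⟩) = u := by
    intro u h
    have := congrArg Subtype.val (Equiv.apply_symm_apply xe ⟨u, h⟩)
    exact this
  -- the equivalence of function spaces
  let Φ : ((Fin k → Fin n) × ({u : VF // u ∉ fi} → Fin n)) ≃ (VF → Fin n) :=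
    { toFun := fun p => combine p.1 p.2
      invFun := fun φ => (fun r => φ (x r), fun u => φ u.1)
      left_inv := by
        rintro ⟨v, ψ⟩
        refine Prod.ext ?_ ?_
        · funext r; exact hcomb_x v ψ r
        · funext u; simp only [combine, dif_neg u.2]
      right_inv := by
        intro φ
        funext u
        by_cases h : u ∈ fi
        · simp only [combine, dif_pos h]
          rw [hx_symm u h]
        · simp only [combine, dif_neg h] }
  -- reindex the sum
  have hsum : ∑ φ : VF → Fin n, (∏ h : ι, edgeInd E (g h) φ) * (edgeInd E fi φ - d) =
      ∑ ψ : {u : VF // u ∉ fi} → Fin n, ∑ v : Fin k → Fin n,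
        (∏ h : ι, edgeInd E (g h) (combine v ψ)) * (edgeInd E fi (combine v ψ) - d) := by
    rw [← Equiv.sum_comp Φ (fun φ => (∏ h : ι, edgeInd E (g h) φ) * (edgeInd E fi φ - d))]
    rw [Fintype.sum_prod_type]
    exact Finset.sum_comm
  -- the per-ψ bound
  have key : ∀ ψ : {u : VF // u ∉ fi} → Fin n,
      |∑ v : Fin k → Fin n,
          (∏ h : ι, edgeInd E (g h) (combine v ψ)) * (edgeInd E fi (combine v ψ) - d)| ≤
        ε * (n:ℝ)^k + (k:ℝ)^2 * (n:ℝ)^(k-1) := by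
    intro ψ
    set w : (Q : Finset (Fin k)) → (({r // r ∈ Q} → Fin n) → ℝ) :=
      fun Q u => ∏ h ∈ univ.filter (fun h => c h = Q),
        edgeInd E (g h) (combine (fun r => if hr : r ∈ Q then u ⟨r, hr⟩ else ⟨0, hn⟩) ψ) with hwdef
    have hw01 : ∀ Q u, 0 ≤ w Q u ∧ w Q u ≤ 1 := by
      intro Q u
      constructor
      · exact Finset.prod_nonneg fun h _ => edgeInd_nonneg E _ _
      · exact Finset.prod_le_one (fun h _ => edgeInd_nonneg E _ _) (fun h _ => edgeInd_le_one E _ _)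
    have hfact : ∀ v : Fin k → Fin n, ∏ h : ι, edgeInd E (g h) (combine v ψ) =
        ∏ Q ∈ 𝒬, w Q (tupleRestrict Q v) := by
      intro v
      rw [← Finset.prod_fiberwise_of_maps_to (fun h _ => hc h)
        (fun h => edgeInd E (g h) (combine v ψ))]
      refine Finset.prod_congr rfl fun Q hQ => ?_
      refine Finset.prod_congr rfl fun h hh => ?_
      have hchQ : c h = Q := (Finset.mem_filter.1 hh).2
      refine edgeInd_congr E _ fun u hu => ?_
      by_cases hufi : u ∈ fi
      · have hrQ : xe.symm ⟨u, hufi⟩ ∈ Q := by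
          rw [← hchQ]
          exact hcQ h _ (by rw [hx_symm u hufi]; exact hu)
        rw [hcomb_mem v ψ u hufi,
          hcomb_mem (fun r => if hr : r ∈ Q then tupleRestrict Q v ⟨r, hr⟩ else ⟨0, hn⟩) ψ u hufi]
        simp only [dif_pos hrQ]
        rfl
      · simp only [combine, dif_neg hufi]
    have hfi' : ∀ v : Fin k → Fin n,
        edgeInd E fi (combine v ψ) = if v ∈ edgeOrd k E then 1 else 0 := by
      intro v
      have hfieq : fi = Finset.image x Finset.univ := by
        apply Finset.eq_of_subset_of_card_le
        · intro u hu
          exact Finset.mem_image.2 ⟨xe.symm ⟨u, hu⟩, Finset.mem_univ _, hx_symm u hu⟩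
        · rw [Finset.card_image_of_injective _ hx, Finset.card_univ, Fintype.card_fin, hficard]
      have himg : Finset.image (combine v ψ) fi = Finset.image v Finset.univ := by
        conv_lhs => rw [hfieq]
        rw [Finset.image_image]
        exact Finset.image_congr fun r _ => hcomb_x v ψ r
      have hinj : Set.InjOn (combine v ψ) ↑fi ↔ Function.Injective v := by
        constructor
        · intro hi r s hrs
          have : combine v ψ (x r) = combine v ψ (x s) := by
            rw [hcomb_x, hcomb_x]; exact hrs
          exact hx (hi (by exact_mod_cast hxmem r) (by exact_mod_cast hxmem s) this)
        · intro hv u hu u' hu' he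
          have hu1 : u ∈ fi := by exact_mod_cast hu
          have hu2 : u' ∈ fi := by exact_mod_cast hu'
          rw [hcomb_mem v ψ u hu1, hcomb_mem v ψ u' hu2] at he
          have := hv he
          calc u = x (xe.symm ⟨u, hu1⟩) := (hx_symm u hu1).symm
            _ = x (xe.symm ⟨u', hu2⟩) := by rw [this]
            _ = u' := hx_symm u' hu2
      have hiff : (Set.InjOn (combine v ψ) ↑fi ∧ Finset.image (combine v ψ) fi ∈ E) ↔
          (v ∈ edgeOrd k E) := by
        simp only [edgeOrd, Set.mem_setOf_eq]
        rw [hinj, himg]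
      unfold edgeInd
      by_cases hvE : v ∈ edgeOrd k E
      · rw [if_pos (hiff.2 hvE), if_pos hvE]
      · rw [if_neg (fun hcon => hvE (hiff.1 hcon)), if_neg hvE]
    -- compare with wProd
    have hdiff : ∀ v : Fin k → Fin n,
        |((if v ∈ edgeOrd k E then (1:ℝ) else 0) - d) * (∏ Q ∈ 𝒬, w Q (tupleRestrict Q v)) -
          ((if v ∈ edgeOrd k E then (1:ℝ) else 0) - d) * wProd 𝒬 w v| ≤
          (if ¬ Function.Injective v then (1:ℝ) else 0) := by
      intro v
      by_cases hv : Function.Injective v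
      · have : wProd 𝒬 w v = ∏ Q ∈ 𝒬, w Q (tupleRestrict Q v) := by
          unfold wProd
          refine Finset.prod_congr rfl fun Q hQ => ?_
          have : Function.Injective (tupleRestrict Q v) := by
            intro a b hab
            exact Subtype.ext (hv hab)
          rw [if_pos this]
        rw [this, sub_self, abs_zero, if_neg (not_not_intro hv)]
      · rw [if_pos hv, ← mul_sub, abs_mul]
        have h1 : |(if v ∈ edgeOrd k E then (1:ℝ) else 0) - d| ≤ 1 := by
          split <;> rw [abs_le] <;> constructor <;> linarith
        have h2 : |(∏ Q ∈ 𝒬, w Q (tupleRestrict Q v)) - wProd 𝒬 w v| ≤ 1 := by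
          by_cases hall : ∀ Q ∈ 𝒬, Function.Injective (tupleRestrict Q v)
          · have : wProd 𝒬 w v = ∏ Q ∈ 𝒬, w Q (tupleRestrict Q v) := by
              unfold wProd
              exact Finset.prod_congr rfl fun Q hQ => if_pos (hall Q hQ)
            rw [this, sub_self, abs_zero]; norm_num
          · push_neg at hall
            obtain ⟨Q, hQ, hQn⟩ := hall
            have : wProd 𝒬 w v = 0 := Finset.prod_eq_zero hQ (if_neg hQn)
            rw [this, sub_zero, abs_of_nonneg
              (Finset.prod_nonneg fun Q _ => (hw01 Q _).1)]
            exact Finset.prod_le_one (fun Q _ => (hw01 Q _).1) (fun Q _ => (hw01 Q _).2)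
        calc |(if v ∈ edgeOrd k E then (1:ℝ) else 0) - d| *
              |(∏ Q ∈ 𝒬, w Q (tupleRestrict Q v)) - wProd 𝒬 w v| ≤ 1 * 1 :=
            mul_le_mul h1 h2 (abs_nonneg _) zero_le_one
          _ = 1 := one_mul 1
    have hWapp := hW w (fun Q y => ⟨by linarith [(hw01 Q y).1], (hw01 Q y).2⟩)
    have hrw : ∑ v : Fin k → Fin n,
        (∏ h : ι, edgeInd E (g h) (combine v ψ)) * (edgeInd E fi (combine v ψ) - d) =
        ∑ v : Fin k → Fin n, ((if v ∈ edgeOrd k E then (1:ℝ) else 0) - d) *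
          (∏ Q ∈ 𝒬, w Q (tupleRestrict Q v)) := by
      refine Finset.sum_congr rfl fun v _ => ?_
      rw [hfact v, hfi' v, mul_comm]
    rw [hrw]
    have hsplit : ∑ v : Fin k → Fin n, ((if v ∈ edgeOrd k E then (1:ℝ) else 0) - d) *
          (∏ Q ∈ 𝒬, w Q (tupleRestrict Q v)) =
        (∑ v : Fin k → Fin n, ((if v ∈ edgeOrd k E then (1:ℝ) else 0) - d) * wProd 𝒬 w v) +
        ∑ v : Fin k → Fin n, (((if v ∈ edgeOrd k E then (1:ℝ) else 0) - d) *
            (∏ Q ∈ 𝒬, w Q (tupleRestrict Q v)) -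
          ((if v ∈ edgeOrd k E then (1:ℝ) else 0) - d) * wProd 𝒬 w v) := by
      rw [← Finset.sum_add_distrib]
      exact Finset.sum_congr rfl fun v _ => by ring
    rw [hsplit]
    have hb2 : |∑ v : Fin k → Fin n, (((if v ∈ edgeOrd k E then (1:ℝ) else 0) - d) *
            (∏ Q ∈ 𝒬, w Q (tupleRestrict Q v)) -
          ((if v ∈ edgeOrd k E then (1:ℝ) else 0) - d) * wProd 𝒬 w v)| ≤
        (k:ℝ)^2 * (n:ℝ)^(k-1) := by
      calc |∑ v : Fin k → Fin n, _| ≤ ∑ v : Fin k → Fin n,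
            |((if v ∈ edgeOrd k E then (1:ℝ) else 0) - d) *
              (∏ Q ∈ 𝒬, w Q (tupleRestrict Q v)) -
            ((if v ∈ edgeOrd k E then (1:ℝ) else 0) - d) * wProd 𝒬 w v| :=
          Finset.abs_sum_le_sum_abs _ _
        _ ≤ ∑ v : Fin k → Fin n, (if ¬ Function.Injective v then (1:ℝ) else 0) :=
          Finset.sum_le_sum fun v _ => hdiff v
        _ = ((univ.filter fun v : Fin k → Fin n => ¬ Function.Injective v).card : ℝ) := by
          rw [Finset.sum_boole]
        _ ≤ (k:ℝ)^2 * (n:ℝ)^(k-1) := by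
          have := card_noninj (Fin k) n
          rw [Fintype.card_fin] at this
          exact_mod_cast this
    calc |_ + _| ≤ _ + _ := abs_add_le _ _
      _ ≤ ε * (n:ℝ)^k + (k:ℝ)^2 * (n:ℝ)^(k-1) := add_le_add hWapp hb2
  -- assemble
  rw [hsum]
  calc |∑ ψ : {u : VF // u ∉ fi} → Fin n, ∑ v : Fin k → Fin n,
        (∏ h : ι, edgeInd E (g h) (combine v ψ)) * (edgeInd E fi (combine v ψ) - d)|
      ≤ ∑ ψ : {u : VF // u ∉ fi} → Fin n, |∑ v : Fin k → Fin n,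
        (∏ h : ι, edgeInd E (g h) (combine v ψ)) * (edgeInd E fi (combine v ψ) - d)| :=
      Finset.abs_sum_le_sum_abs _ _
    _ ≤ ∑ _ψ : {u : VF // u ∉ fi} → Fin n, (ε * (n:ℝ)^k + (k:ℝ)^2 * (n:ℝ)^(k-1)) :=
      Finset.sum_le_sum fun ψ _ => key ψ
    _ = (ε * (n:ℝ)^k + (k:ℝ)^2 * (n:ℝ)^(k-1)) * (n:ℝ)^(Fintype.card VF - k) := by
      rw [Finset.sum_const, Finset.card_univ, nsmul_eq_mul, mul_comm]
      congr 1
      have hcard : Fintype.card {u : VF // u ∉ fi} = Fintype.card VF - k := by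
        simp [hficard]
      rw [Fintype.card_fun, Fintype.card_fin, hcard]
      push_cast
      rfl
noncomputable def aFun {n : ℕ} (E : Finset (Finset (Fin n))) {VF : Type} {m : ℕ}
    (e : Fin m → Finset VF) (φ : VF → Fin n) (j : ℕ) : ℝ :=
  if hj : j < m then edgeInd E (e ⟨j, hj⟩) φ else 1

lemma aFun_lt {n : ℕ} (E : Finset (Finset (Fin n))) {VF : Type} {m : ℕ}
    (e : Fin m → Finset VF) (φ : VF → Fin n) (j : ℕ) (hj : j < m) :
    aFun E e φ j = edgeInd E (e ⟨j, hj⟩) φ := dif_pos hj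

lemma aFun_nonneg {n : ℕ} (E : Finset (Finset (Fin n))) {VF : Type} {m : ℕ}
    (e : Fin m → Finset VF) (φ : VF → Fin n) (j : ℕ) : 0 ≤ aFun E e φ j := by
  unfold aFun; split
  · exact edgeInd_nonneg E _ _
  · norm_num

lemma aFun_le_one {n : ℕ} (E : Finset (Finset (Fin n))) {VF : Type} {m : ℕ}
    (e : Fin m → Finset VF) (φ : VF → Fin n) (j : ℕ) : aFun E e φ j ≤ 1 := by
  unfold aFun; split
  · exact edgeInd_le_one E _ _
  · norm_num

/-- `WDISC ⟹ CL` for `𝒬`-simple `F`. -/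
theorem wdisc_implies_cl (k : ℕ) (hk : 2 ≤ k) (𝒬 : Finset (Finset (Fin k)))
    (h𝒬 : Finset.univ ∉ 𝒬) (d : ℝ) (hd0 : 0 ≤ d) (hd1 : d ≤ 1)
    (VF : Type) [Fintype VF] [DecidableEq VF] (EF : Finset (Finset VF))
    (hunif : ∀ f ∈ EF, f.card = k) (hsimple : QSimple 𝒬 EF) (δ : ℝ) (hδ : 0 < δ) :
    ∃ ε > (0 : ℝ), ∃ n₀ : ℕ, ∀ n ≥ n₀, ∀ E : Finset (Finset (Fin n)),
      (∀ e ∈ E, e.card = k) → WDISC k n 𝒬 d ε E → CL VF EF d δ E := by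
  classical
  set m := EF.card with hm
  set v := Fintype.card VF with hv
  obtain ⟨e, he1, he2, he3⟩ := hsimple
  choose X hX using he3
  have hXinj : ∀ j, Function.Injective (X j) := fun j => (hX j).1
  have hXmem : ∀ j r, X j r ∈ e j := fun j r => (hX j).2.1 r
  have hXQ : ∀ j h, h < j → ∃ Q ∈ 𝒬, ∀ r, X j r ∈ e h → r ∈ Q := by
    intro j h hlt
    obtain ⟨Q, hQ𝒬, hQ⟩ := (hX j).2.2 h hlt
    exact ⟨Q, hQ𝒬, fun r hr => hQ r ⟨hr, hXmem j r⟩⟩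
  choose Qc hQc𝒬 hQcr using hXQ
  set ε := δ / (2 * ((m : ℝ) + 1)) with hε
  have hεpos : 0 < ε := by positivity
  obtain ⟨N, hN⟩ := exists_nat_ge ((2 * ((v:ℝ)^2 + (m:ℝ) * (k:ℝ)^2)) / δ)
  refine ⟨ε, hεpos, max N 1, fun n hn E _hEk hW => ?_⟩
  have hn1 : 1 ≤ n := le_trans (le_max_right N 1) hn
  have hn0 : 0 < n := hn1
  have hnN : ((2 * ((v:ℝ)^2 + (m:ℝ) * (k:ℝ)^2)) / δ) ≤ (n:ℝ) := by
    refine hN.trans ?_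
    exact_mod_cast le_trans (le_max_left N 1) hn
  have hnR : (0:ℝ) < n := by exact_mod_cast hn0
  by_cases hv0 : v = 0
  · -- VF is empty
    have hVF : IsEmpty VF := Fintype.card_eq_zero_iff.1 hv0
    have hEF : EF = ∅ := by
      rw [Finset.eq_empty_iff_forall_notMem]
      intro f hf
      have hfc := hunif f hf
      have hne : f.Nonempty := Finset.card_pos.1 (by omega)
      obtain ⟨u, _⟩ := hne
      exact hVF.false u
    have hset : {φ : VF → Fin n | Function.Injective φ ∧ ∀ f ∈ EF, Finset.image φ f ∈ E} =
        Set.univ := by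
      ext φ
      simp only [Set.mem_setOf_eq, Set.mem_univ, iff_true, hEF]
      exact ⟨fun a b => by exact (hVF.false a).elim, fun f hf => by simp at hf⟩
    have hlc : labeledCopies VF EF E = 1 := by
      unfold labeledCopies
      rw [hset, Set.ncard_univ, Nat.card_eq_fintype_card, Fintype.card_fun, ← hv, hv0, pow_zero]
    unfold CL
    rw [hlc, hEF, ← hv, hv0]
    norm_num
    exact hδ.le
  -- main case
  have hv1 : 1 ≤ v := by omega
  -- Step A : labeled copies as a sum
  have hprod : ∀ φ : VF → Fin n, ∏ j ∈ Finset.range m, aFun E e φ j =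
      ∏ j : Fin m, edgeInd E (e j) φ := by
    intro φ
    rw [← Fin.prod_univ_eq_prod_range (fun j => aFun E e φ j) m]
    exact Finset.prod_congr rfl fun j _ => by rw [aFun_lt E e φ j.1 j.2]
  have hLC : (labeledCopies VF EF E : ℝ) =
      ∑ φ : VF → Fin n, (if Function.Injective φ then (1:ℝ) else 0) *
        ∏ j ∈ Finset.range m, aFun E e φ j := by
    have h2 : ∀ φ : VF → Fin n, (if Function.Injective φ then (1:ℝ) else 0) *
        ∏ j ∈ Finset.range m, aFun E e φ j =
        if (Function.Injective φ ∧ ∀ f ∈ EF, Finset.image φ f ∈ E) then 1 else 0 := by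
      intro φ
      by_cases hφ : Function.Injective φ
      · rw [if_pos hφ, one_mul, hprod φ]
        have heach : ∀ j : Fin m, edgeInd E (e j) φ =
            if Finset.image φ (e j) ∈ E then 1 else 0 := by
          intro j
          unfold edgeInd
          by_cases him : Finset.image φ (e j) ∈ E
          · rw [if_pos ⟨hφ.injOn, him⟩, if_pos him]
          · rw [if_neg (fun hcon => him hcon.2), if_neg him]
        rw [Finset.prod_congr rfl fun j _ => heach j, Finset.prod_boole]
        by_cases hall : ∀ f ∈ EF, Finset.image φ f ∈ E
        · rw [if_pos (fun j _ => hall (e j) (he1 j)), if_pos ⟨hφ, hall⟩]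
        · rw [if_neg ?_, if_neg (fun hcon => hall hcon.2)]
          intro hcon
          apply hall
          intro f hf
          obtain ⟨j, hj⟩ := he2 f hf
          rw [← hj]
          exact hcon j (Finset.mem_univ j)
      · rw [if_neg hφ, zero_mul, if_neg (fun hcon => hφ hcon.1)]
    rw [Finset.sum_congr rfl fun φ _ => h2 φ, Finset.sum_boole]
    congr 1
    rw [labeledCopies, Set.ncard_eq_toFinset_card']
    congr 1
    ext φ
    simp
  -- Step B
  have hprod01 : ∀ φ : VF → Fin n, 0 ≤ (∏ j ∈ Finset.range m, aFun E e φ j) ∧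
      (∏ j ∈ Finset.range m, aFun E e φ j) ≤ 1 := fun φ =>
    ⟨Finset.prod_nonneg fun j _ => aFun_nonneg E e φ j,
     Finset.prod_le_one (fun j _ => aFun_nonneg E e φ j) (fun j _ => aFun_le_one E e φ j)⟩
  have hB : |(labeledCopies VF EF E : ℝ) -
      ∑ φ : VF → Fin n, ∏ j ∈ Finset.range m, aFun E e φ j| ≤ (v:ℝ)^2 * (n:ℝ)^(v-1) := by
    rw [hLC, ← Finset.sum_sub_distrib]
    calc |∑ φ : VF → Fin n, ((if Function.Injective φ then (1:ℝ) else 0) *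
            (∏ j ∈ Finset.range m, aFun E e φ j) - ∏ j ∈ Finset.range m, aFun E e φ j)|
        ≤ ∑ φ : VF → Fin n, |(if Function.Injective φ then (1:ℝ) else 0) *
            (∏ j ∈ Finset.range m, aFun E e φ j) - ∏ j ∈ Finset.range m, aFun E e φ j| :=
          Finset.abs_sum_le_sum_abs _ _
      _ ≤ ∑ φ : VF → Fin n, (if ¬ Function.Injective φ then (1:ℝ) else 0) := by
          refine Finset.sum_le_sum fun φ _ => ?_
          by_cases hφ : Function.Injective φ
          · rw [if_pos hφ, one_mul, sub_self, abs_zero, if_neg (not_not_intro hφ)]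
          · rw [if_neg hφ, zero_mul, zero_sub, abs_neg, if_pos hφ,
              abs_of_nonneg (hprod01 φ).1]
            exact (hprod01 φ).2
      _ = ((Finset.univ.filter fun φ : VF → Fin n => ¬ Function.Injective φ).card : ℝ) := by
          rw [Finset.sum_boole]
      _ ≤ (v:ℝ)^2 * (n:ℝ)^(v-1) := by
          have := card_noninj VF n
          rw [← hv] at this
          exact_mod_cast this
  -- Step C : telescoping
  have hC : ∑ φ : VF → Fin n, (∏ j ∈ Finset.range m, aFun E e φ j) - d ^ m * (n:ℝ)^v =
      ∑ i ∈ Finset.range m, d ^ (m - 1 - i) *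
        ∑ φ : VF → Fin n, (∏ h ∈ Finset.range i, aFun E e φ h) * (aFun E e φ i - d) := by
    have hcard : ((Fintype.card (VF → Fin n) : ℝ)) = (n:ℝ)^v := by
      rw [Fintype.card_fun, Fintype.card_fin]
      push_cast
      rfl
    calc ∑ φ : VF → Fin n, (∏ j ∈ Finset.range m, aFun E e φ j) - d ^ m * (n:ℝ)^v
        = ∑ φ : VF → Fin n, ((∏ j ∈ Finset.range m, aFun E e φ j) - d ^ m) := by
          rw [Finset.sum_sub_distrib, Finset.sum_const, Finset.card_univ, nsmul_eq_mul, hcard]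
          ring
      _ = ∑ φ : VF → Fin n, ∑ i ∈ Finset.range m,
            (∏ h ∈ Finset.range i, aFun E e φ h) * (aFun E e φ i - d) * d ^ (m - 1 - i) := by
          exact Finset.sum_congr rfl fun φ _ => telescope m d (aFun E e φ)
      _ = ∑ i ∈ Finset.range m, ∑ φ : VF → Fin n,
            (∏ h ∈ Finset.range i, aFun E e φ h) * (aFun E e φ i - d) * d ^ (m - 1 - i) :=
          Finset.sum_comm
      _ = ∑ i ∈ Finset.range m, d ^ (m - 1 - i) *
            ∑ φ : VF → Fin n, (∏ h ∈ Finset.range i, aFun E e φ h) * (aFun E e φ i - d) := by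
          refine Finset.sum_congr rfl fun i _ => ?_
          rw [Finset.mul_sum]
          exact Finset.sum_congr rfl fun φ _ => by ring
  -- Step D : per-term bound via core_disc
  have hD : ∀ i ∈ Finset.range m,
      |∑ φ : VF → Fin n, (∏ h ∈ Finset.range i, aFun E e φ h) * (aFun E e φ i - d)| ≤
        (ε * (n:ℝ)^k + (k:ℝ)^2 * (n:ℝ)^(k-1)) * (n:ℝ)^(v-k) := by
    intro i hi
    have him : i < m := Finset.mem_range.1 hi
    have hrw : ∀ φ : VF → Fin n, (∏ h ∈ Finset.range i, aFun E e φ h) * (aFun E e φ i - d) =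
        (∏ t : Fin i, edgeInd E (e ⟨t.1, lt_trans t.2 him⟩) φ) *
          (edgeInd E (e ⟨i, him⟩) φ - d) := by
      intro φ
      rw [aFun_lt E e φ i him]
      congr 1
      rw [← Fin.prod_univ_eq_prod_range (fun h => aFun E e φ h) i]
      exact Finset.prod_congr rfl fun t _ => aFun_lt E e φ t.1 (lt_trans t.2 him)
    rw [Finset.sum_congr rfl fun φ _ => hrw φ]
    exact core_disc k n hn0 𝒬 d ε hd0 hd1 E hW VF (Fin i)
      (fun t => e ⟨t.1, lt_trans t.2 him⟩) (e ⟨i, him⟩) (X ⟨i, him⟩)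
      (hXinj ⟨i, him⟩) (hXmem ⟨i, him⟩) (hunif _ (he1 ⟨i, him⟩))
      (fun t => Qc ⟨i, him⟩ ⟨t.1, lt_trans t.2 him⟩ t.2)
      (fun t => hQc𝒬 ⟨i, him⟩ ⟨t.1, lt_trans t.2 him⟩ t.2)
      (fun t r hr => hQcr ⟨i, him⟩ ⟨t.1, lt_trans t.2 him⟩ t.2 r hr)
  -- assembling
  unfold CL
  rw [← hm, ← hv]
  have hstep : |(labeledCopies VF EF E : ℝ) - d ^ m * (n:ℝ)^v| ≤
      (v:ℝ)^2 * (n:ℝ)^(v-1) +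
        (m:ℝ) * ((ε * (n:ℝ)^k + (k:ℝ)^2 * (n:ℝ)^(k-1)) * (n:ℝ)^(v-k)) := by
    calc |(labeledCopies VF EF E : ℝ) - d ^ m * (n:ℝ)^v|
        ≤ |(labeledCopies VF EF E : ℝ) -
              ∑ φ : VF → Fin n, ∏ j ∈ Finset.range m, aFun E e φ j| +
            |∑ φ : VF → Fin n, (∏ j ∈ Finset.range m, aFun E e φ j) - d ^ m * (n:ℝ)^v| := by
          have := abs_sub_le ((labeledCopies VF EF E : ℝ))
            (∑ φ : VF → Fin n, ∏ j ∈ Finset.range m, aFun E e φ j) (d ^ m * (n:ℝ)^v)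
          exact this
      _ ≤ (v:ℝ)^2 * (n:ℝ)^(v-1) +
            (m:ℝ) * ((ε * (n:ℝ)^k + (k:ℝ)^2 * (n:ℝ)^(k-1)) * (n:ℝ)^(v-k)) := by
          refine add_le_add hB ?_
          rw [hC]
          calc |∑ i ∈ Finset.range m, d ^ (m - 1 - i) *
                ∑ φ : VF → Fin n, (∏ h ∈ Finset.range i, aFun E e φ h) * (aFun E e φ i - d)|
              ≤ ∑ i ∈ Finset.range m, |d ^ (m - 1 - i) *
                ∑ φ : VF → Fin n, (∏ h ∈ Finset.range i, aFun E e φ h) * (aFun E e φ i - d)| :=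
              Finset.abs_sum_le_sum_abs _ _
            _ ≤ ∑ i ∈ Finset.range m,
                  (ε * (n:ℝ)^k + (k:ℝ)^2 * (n:ℝ)^(k-1)) * (n:ℝ)^(v-k) := by
                refine Finset.sum_le_sum fun i hi => ?_
                rw [abs_mul]
                have hdle : |d ^ (m - 1 - i)| ≤ 1 := by
                  rw [abs_pow]
                  exact pow_le_one₀ (abs_nonneg d) (by rw [abs_of_nonneg hd0]; exact hd1)
                calc |d ^ (m - 1 - i)| * |∑ φ : VF → Fin n,
                      (∏ h ∈ Finset.range i, aFun E e φ h) * (aFun E e φ i - d)|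
                    ≤ 1 * ((ε * (n:ℝ)^k + (k:ℝ)^2 * (n:ℝ)^(k-1)) * (n:ℝ)^(v-k)) :=
                    mul_le_mul hdle (hD i hi) (abs_nonneg _) zero_le_one
                  _ = (ε * (n:ℝ)^k + (k:ℝ)^2 * (n:ℝ)^(k-1)) * (n:ℝ)^(v-k) := one_mul _
            _ = (m:ℝ) * ((ε * (n:ℝ)^k + (k:ℝ)^2 * (n:ℝ)^(k-1)) * (n:ℝ)^(v-k)) := by
                rw [Finset.sum_const, Finset.card_range, nsmul_eq_mul]
  refine hstep.trans ?_
  -- final numeric bound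
  have hnv1 : (n:ℝ)^(v-1) * (n:ℝ) = (n:ℝ)^v := by
    rw [← pow_succ]
    congr 1
    omega
  have hfinal2 : ((v:ℝ)^2 + (m:ℝ) * (k:ℝ)^2) * (n:ℝ)^(v-1) ≤ (δ/2) * (n:ℝ)^v := by
    have h1 : 2 * ((v:ℝ)^2 + (m:ℝ) * (k:ℝ)^2) ≤ δ * n := by
      rw [div_le_iff₀ hδ] at hnN
      linarith
    have h2 : (0:ℝ) ≤ (n:ℝ)^(v-1) := by positivity
    calc ((v:ℝ)^2 + (m:ℝ) * (k:ℝ)^2) * (n:ℝ)^(v-1) ≤ ((δ * n)/2) * (n:ℝ)^(v-1) := by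
          apply mul_le_mul_of_nonneg_right _ h2
          linarith
      _ = (δ/2) * (n:ℝ)^v := by rw [← hnv1]; ring
  by_cases hm0 : m = 0
  · rw [hm0] at hfinal2 ⊢
    simp only [Nat.cast_zero, zero_mul, add_zero] at hfinal2 ⊢
    have hp : (0:ℝ) ≤ (n:ℝ)^v := by positivity
    nlinarith [hfinal2]
  · have hm1 : 1 ≤ m := by omega
    have hkv : k ≤ v := by
      have := Fintype.card_le_of_injective (X ⟨0, hm1⟩) (hXinj ⟨0, hm1⟩)
      rwa [Fintype.card_fin] at this
    have hpow1 : (n:ℝ)^k * (n:ℝ)^(v-k) = (n:ℝ)^v := by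
      rw [← pow_add]; congr 1; omega
    have hpow2 : (n:ℝ)^(k-1) * (n:ℝ)^(v-k) = (n:ℝ)^(v-1) := by
      rw [← pow_add]; congr 1; omega
    have hexp : (m:ℝ) * ((ε * (n:ℝ)^k + (k:ℝ)^2 * (n:ℝ)^(k-1)) * (n:ℝ)^(v-k)) =
        (m:ℝ) * ε * (n:ℝ)^v + (m:ℝ) * (k:ℝ)^2 * (n:ℝ)^(v-1) := by
      rw [add_mul, mul_add]
      rw [mul_assoc ε, hpow1, mul_assoc ((k:ℝ)^2), hpow2]
      ring
    rw [hexp]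
    have hmε : (m:ℝ) * ε ≤ δ / 2 := by
      rw [hε]
      have h1 : (m:ℝ) ≤ (m:ℝ) + 1 := by linarith
      have h2 : (0:ℝ) < (m:ℝ) + 1 := by positivity
      calc (m:ℝ) * (δ / (2 * ((m:ℝ) + 1))) ≤ ((m:ℝ) + 1) * (δ / (2 * ((m:ℝ) + 1))) :=
            mul_le_mul_of_nonneg_right h1 (by positivity)
        _ = δ / 2 := by field_simp
    have hterm1 : (m:ℝ) * ε * (n:ℝ)^v ≤ (δ/2) * (n:ℝ)^v :=
      mul_le_mul_of_nonneg_right hmε (by positivity)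
    have hterm2 : (v:ℝ)^2 * (n:ℝ)^(v-1) + (m:ℝ) * (k:ℝ)^2 * (n:ℝ)^(v-1) ≤ (δ/2) * (n:ℝ)^v := by
      calc (v:ℝ)^2 * (n:ℝ)^(v-1) + (m:ℝ) * (k:ℝ)^2 * (n:ℝ)^(v-1)
          = ((v:ℝ)^2 + (m:ℝ) * (k:ℝ)^2) * (n:ℝ)^(v-1) := by ring
        _ ≤ (δ/2) * (n:ℝ)^v := hfinal2
    linarith
end

section
/- For every integer k ≥ 2, every set system 𝒬 ⊆ 𝒫([k]) \ {[k]}, every d ∈ [0,1], and every δ > 0, there exists ε > 0 such that every n-vertex k-uniform hypergraph H that satisfies CL_{𝒬,d}(F,ε) for every subhypergraph F ⊆ M_𝒬 also satisfies DEV_{𝒬,d}(δ). -/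
open Finset
open scoped Classical

lemma labeledCopies_eq_sum {n : ℕ} (VF : Type) [Fintype VF] [DecidableEq VF]
    [inst : DecidablePred (Function.Injective : (VF → Fin n) → Prop)]
    (EF : Finset (Finset VF)) (E : Finset (Finset (Fin n))) :
    (labeledCopies VF EF E : ℝ) =
      ∑ φ ∈ Finset.univ.filter (fun φ : VF → Fin n => Function.Injective φ),
        ∏ f ∈ EF, (if Finset.image φ f ∈ E then (1:ℝ) else 0) := by
  classical
  have h1 : ∀ φ : VF → Fin n,
      (∏ f ∈ EF, (if Finset.image φ f ∈ E then (1:ℝ) else 0)) =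
        (if ∀ f ∈ EF, Finset.image φ f ∈ E then (1:ℝ) else 0) := by
    intro φ; rw [Finset.prod_boole]; convert rfl
  calc (labeledCopies VF EF E : ℝ)
      = ((Finset.univ.filter (fun φ : VF → Fin n =>
          Function.Injective φ ∧ ∀ f ∈ EF, Finset.image φ f ∈ E)).card : ℝ) := by
        rw [labeledCopies, Set.ncard_eq_toFinset_card']
        congr 2
        ext φ
        simp
    _ = ∑ φ ∈ Finset.univ.filter (fun φ : VF → Fin n => Function.Injective φ),
          (if ∀ f ∈ EF, Finset.image φ f ∈ E then (1:ℝ) else 0) := by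
        rw [Finset.sum_boole, Finset.filter_filter]
    _ = _ := by
        refine Finset.sum_congr rfl fun φ _ => ?_
        rw [h1 φ]

lemma MEdges_nonempty {k : ℕ} (𝒬 : Finset (Finset (Fin k))) : (MEdges 𝒬).Nonempty := by
  classical
  exact ⟨MEdge 𝒬 (fun _ => false), Finset.mem_image.2 ⟨_, Finset.mem_univ _, rfl⟩⟩

/-- `CL` for all subhypergraphs of `M_𝒬` implies `DEV`. -/
theorem cl_implies_dev (k : ℕ) (hk : 2 ≤ k) (𝒬 : Finset (Finset (Fin k)))
    (h𝒬 : Finset.univ ∉ 𝒬) (d : ℝ) (hd0 : 0 ≤ d) (hd1 : d ≤ 1) (δ : ℝ) (hδ : 0 < δ) :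
    ∃ ε > (0 : ℝ), ∀ n : ℕ, ∀ E : Finset (Finset (Fin n)),
      (∀ e ∈ E, e.card = k) →
      (∀ EF ⊆ MEdges 𝒬, CL (MVertex k 𝒬) EF d ε E) →
      DEV k n 𝒬 d δ E := by
  set m := (MEdges 𝒬).card with hm
  have hm1 : 1 ≤ m := Finset.card_pos.2 (MEdges_nonempty 𝒬)
  refine ⟨δ / 2 ^ m, by positivity, ?_⟩
  intro n E hE hCL
  unfold DEV
  set V := Fintype.card (MVertex k 𝒬) with hV
  -- expand the product
  have expand : ∀ φ : MVertex k 𝒬 → Fin n,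
      ∏ f ∈ MEdges 𝒬, ((if Finset.image φ f ∈ E then (1:ℝ) else 0) - d)
        = ∑ S ∈ (MEdges 𝒬).powerset,
            (∏ f ∈ S, (if Finset.image φ f ∈ E then (1:ℝ) else 0)) * (-d) ^ (m - S.card) := by
    intro φ
    have h := Finset.prod_add (fun f => (if Finset.image φ f ∈ E then (1:ℝ) else 0))
      (fun _ => -d) (MEdges 𝒬)
    simp only [sub_eq_add_neg]
    rw [h]
    refine Finset.sum_congr rfl fun S hS => ?_
    rw [Finset.prod_const, Finset.card_sdiff_of_subset (Finset.mem_powerset.1 hS)]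
  have key : ∑ φ ∈ Finset.univ.filter (fun φ : MVertex k 𝒬 → Fin n => Function.Injective φ), ∏ f ∈ MEdges 𝒬, ((if Finset.image φ f ∈ E then (1:ℝ) else 0) - d)
      = ∑ S ∈ (MEdges 𝒬).powerset,
          (labeledCopies (MVertex k 𝒬) S E : ℝ) * (-d) ^ (m - S.card) := by
    rw [Finset.sum_congr rfl fun φ _ => expand φ, Finset.sum_comm]
    refine Finset.sum_congr rfl fun S _ => ?_
    rw [← Finset.sum_mul, labeledCopies_eq_sum]
  have hz : ∑ S ∈ (MEdges 𝒬).powerset, d ^ S.card * (-d) ^ (m - S.card) = 0 := by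
    have h := Finset.prod_add (fun _ : Finset (MVertex k 𝒬) => d) (fun _ => -d) (MEdges 𝒬)
    simp only [Finset.prod_const, add_neg_cancel] at h
    calc ∑ S ∈ (MEdges 𝒬).powerset, d ^ S.card * (-d) ^ (m - S.card)
        = ∑ S ∈ (MEdges 𝒬).powerset, d ^ S.card * (-d) ^ ((MEdges 𝒬 \ S).card) := by
          refine Finset.sum_congr rfl fun S hS => ?_
          rw [Finset.card_sdiff_of_subset (Finset.mem_powerset.1 hS)]
      _ = (0:ℝ) ^ m := h.symm
      _ = 0 := zero_pow (by omega)
  have zero_sum : ∑ S ∈ (MEdges 𝒬).powerset,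
      (d ^ S.card * (n:ℝ) ^ V) * (-d) ^ (m - S.card) = 0 := by
    calc ∑ S ∈ (MEdges 𝒬).powerset, (d ^ S.card * (n:ℝ) ^ V) * (-d) ^ (m - S.card)
        = (n:ℝ) ^ V * ∑ S ∈ (MEdges 𝒬).powerset, d ^ S.card * (-d) ^ (m - S.card) := by
          rw [Finset.mul_sum]; exact Finset.sum_congr rfl fun S _ => by ring
      _ = 0 := by rw [hz, mul_zero]
  have bound : |∑ φ ∈ Finset.univ.filter (fun φ : MVertex k 𝒬 → Fin n => Function.Injective φ), ∏ f ∈ MEdges 𝒬, ((if Finset.image φ f ∈ E then (1:ℝ) else 0) - d)|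
      ≤ δ * (n:ℝ) ^ V := by
    rw [key, ← sub_zero (∑ S ∈ (MEdges 𝒬).powerset, _), ← zero_sum, ← Finset.sum_sub_distrib]
    calc |∑ S ∈ (MEdges 𝒬).powerset,
        ((labeledCopies (MVertex k 𝒬) S E : ℝ) * (-d) ^ (m - S.card)
          - (d ^ S.card * (n:ℝ) ^ V) * (-d) ^ (m - S.card))|
        ≤ ∑ S ∈ (MEdges 𝒬).powerset,
            |((labeledCopies (MVertex k 𝒬) S E : ℝ)
              - d ^ S.card * (n:ℝ) ^ V) * (-d) ^ (m - S.card)| := by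
          refine (Finset.abs_sum_le_sum_abs _ _).trans_eq ?_
          refine Finset.sum_congr rfl fun S _ => ?_
          rw [← sub_mul]
      _ ≤ ∑ _S ∈ (MEdges 𝒬).powerset, (δ / 2 ^ m) * (n:ℝ) ^ V := by
          refine Finset.sum_le_sum fun S hS => ?_
          rw [abs_mul]
          have h1 := hCL S (Finset.mem_powerset.1 hS)
          have h2 : |(-d) ^ (m - S.card)| ≤ 1 := by
            rw [abs_pow, abs_neg, abs_of_nonneg hd0]
            exact pow_le_one₀ hd0 hd1
          calc |(labeledCopies (MVertex k 𝒬) S E : ℝ) - d ^ S.card * (n:ℝ) ^ V|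
                * |(-d) ^ (m - S.card)|
              ≤ (δ / 2 ^ m * (n:ℝ) ^ V) * 1 :=
                mul_le_mul h1 h2 (abs_nonneg _) (by positivity)
            _ = δ / 2 ^ m * (n:ℝ) ^ V := mul_one _
      _ = δ * (n:ℝ) ^ V := by
          rw [Finset.sum_const, Finset.card_powerset, nsmul_eq_mul]
          push_cast
          field_simp
          rfl
  exact (le_abs_self _).trans bound
end

section
/- For every integer k ≥ 2, every set system 𝒬 = {Q_1,…,Q_ℓ} ⊆ 𝒫([k]) \ {[k]}, every d ∈ [0,1], and every δ > 0, there exists ε > 0 such that for all sufficiently large n the following holds: if H = (V,E) is an n-vertex k-uniform hypergraph satisfying |Σ_{φ : V(M_𝒬) → V} Π_{f ∈ E(M_𝒬)} (1_{E⃗}(φ(f)) − d)| ≤ ε n^{v(M_𝒬)}, where the sum ranges over all (not necessarily injective) maps φ and φ(f) is the ordered k-tuple of images of the vertices of the edge f (ordered according to the k vertex classes of M_𝒬), then H satisfies WDISC_{𝒬,d}(δ). -/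
open Finset
open scoped Classical

namespace DevAux

variable {k : ℕ}

def liftX (𝒮 : Finset (Finset (Fin k))) (Q : Finset (Fin k))
    (z : MVertex k 𝒮) (h : z.1 ∈ Q) : MVertex k (insert Q 𝒮) :=
  ⟨z.1, fun p => z.2 ⟨p.1, ⟨(Finset.mem_insert.mp p.2.1).resolve_left
      (fun e => p.2.2 (by rw [e]; exact h)), p.2.2⟩⟩⟩

def liftY (𝒮 : Finset (Finset (Fin k))) (Q : Finset (Fin k)) (c : Bool)
    (z : MVertex k 𝒮) (_h : z.1 ∉ Q) : MVertex k (insert Q 𝒮) :=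
  ⟨z.1, fun p => if hp : p.1 = Q then c
    else z.2 ⟨p.1, ⟨(Finset.mem_insert.mp p.2.1).resolve_left hp, p.2.2⟩⟩⟩

def projS (𝒮 : Finset (Finset (Fin k))) (Q : Finset (Fin k))
    (z' : MVertex k (insert Q 𝒮)) : MVertex k 𝒮 :=
  ⟨z'.1, fun p => z'.2 ⟨p.1, ⟨Finset.mem_insert_of_mem p.2.1, p.2.2⟩⟩⟩

lemma projS_liftX (𝒮 : Finset (Finset (Fin k))) (Q : Finset (Fin k))
    (z : MVertex k 𝒮) (h : z.1 ∈ Q) : projS 𝒮 Q (liftX 𝒮 Q z h) = z := by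
  cases z with
  | mk i b => exact congrArg (Sigma.mk i) (funext fun p => rfl)

lemma projS_liftY (𝒮 : Finset (Finset (Fin k))) {Q : Finset (Fin k)} (hQ : Q ∉ 𝒮) (c : Bool)
    (z : MVertex k 𝒮) (h : z.1 ∉ Q) : projS 𝒮 Q (liftY 𝒮 Q c z h) = z := by
  cases z with
  | mk i b =>
    refine congrArg (Sigma.mk i) (funext fun p => ?_)
    show (if hp : p.1 = Q then c else _) = b p
    rw [dif_neg (fun e : p.1 = Q => hQ (e ▸ p.2.1))]; rfl

lemma liftY_bit (𝒮 : Finset (Finset (Fin k))) (Q : Finset (Fin k)) (c : Bool)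
    (z : MVertex k 𝒮) (h : z.1 ∉ Q) :
    (liftY 𝒮 Q c z h).2 ⟨Q, ⟨Finset.mem_insert_self _ _, h⟩⟩ = c := dif_pos rfl

lemma liftY_bit' (𝒮 : Finset (Finset (Fin k))) (Q : Finset (Fin k)) (c : Bool)
    (z : MVertex k 𝒮) (h : z.1 ∉ Q) (pf : Q ∈ insert Q 𝒮 ∧ (liftY 𝒮 Q c z h).1 ∉ Q) :
    (liftY 𝒮 Q c z h).2 ⟨Q, pf⟩ = c := dif_pos rfl

lemma liftX_projS (𝒮 : Finset (Finset (Fin k))) (Q : Finset (Fin k))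
    (z' : MVertex k (insert Q 𝒮)) (h : z'.1 ∈ Q) :
    liftX 𝒮 Q (projS 𝒮 Q z') h = z' := by
  cases z' with
  | mk i b => exact congrArg (Sigma.mk i) (funext fun p => rfl)

lemma liftY_projS (𝒮 : Finset (Finset (Fin k))) (Q : Finset (Fin k))
    (z' : MVertex k (insert Q 𝒮)) (h : z'.1 ∉ Q) :
    liftY 𝒮 Q (z'.2 ⟨Q, ⟨Finset.mem_insert_self _ _, h⟩⟩) (projS 𝒮 Q z') h = z' := by
  cases z' with
  | mk i b =>
    refine congrArg (Sigma.mk i) (funext fun p => ?_)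
    show (if hp : p.1 = Q then _ else _) = b p
    obtain ⟨P, hP⟩ := p
    by_cases hp : P = Q
    · subst hp; rw [dif_pos rfl]; rfl
    · rw [dif_neg hp]; rfl

end DevAux

namespace DevAux2
open DevAux

variable {k n : ℕ}

noncomputable def splitEquiv (𝒮 : Finset (Finset (Fin k))) (Q : Finset (Fin k)) (hQ : Q ∉ 𝒮) :
    ({z : MVertex k 𝒮 // z.1 ∈ Q} ⊕ ({z : MVertex k 𝒮 // z.1 ∉ Q} × Bool)) ≃
      MVertex k (insert Q 𝒮) where
  toFun := Sum.elim (fun p => liftX 𝒮 Q p.1 p.2) (fun p => liftY 𝒮 Q p.2 p.1.1 p.1.2)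
  invFun z' := if h : z'.1 ∈ Q then .inl ⟨projS 𝒮 Q z', h⟩
    else .inr (⟨projS 𝒮 Q z', h⟩, z'.2 ⟨Q, ⟨Finset.mem_insert_self _ _, h⟩⟩)
  left_inv := by
    rintro (⟨z, h⟩ | ⟨⟨z, h⟩, c⟩)
    · show (if h' : z.1 ∈ Q then _ else _) = _
      rw [dif_pos h]
      simp only [Sum.inl.injEq, Subtype.mk.injEq]
      exact Subtype.ext (projS_liftX 𝒮 Q z h)
    · show (if h' : z.1 ∈ Q then _ else _) = _
      rw [dif_neg h]
      simp only [Sum.inr.injEq, Prod.mk.injEq, Subtype.mk.injEq]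
      exact ⟨Subtype.ext (projS_liftY 𝒮 hQ c z h), liftY_bit 𝒮 Q c z h⟩
  right_inv := by
    intro z'
    dsimp only
    by_cases h : z'.1 ∈ Q
    · rw [dif_pos h]
      exact liftX_projS 𝒮 Q z' h
    · rw [dif_neg h]
      exact liftY_projS 𝒮 Q z' h

lemma card_insert (𝒮 : Finset (Finset (Fin k))) (Q : Finset (Fin k)) (hQ : Q ∉ 𝒮) :
    Fintype.card (MVertex k (insert Q 𝒮)) + Fintype.card {z : MVertex k 𝒮 // z.1 ∈ Q} =
      2 * Fintype.card (MVertex k 𝒮) := by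
  have h1 := Fintype.card_congr (splitEquiv 𝒮 Q hQ)
  have h2 := Fintype.card_congr (Equiv.sumCompl (fun z : MVertex k 𝒮 => z.1 ∈ Q))
  rw [Fintype.card_sum, Fintype.card_prod, Fintype.card_bool] at h1
  rw [Fintype.card_sum] at h2
  omega

def mergeXY (𝒮 : Finset (Finset (Fin k))) (Q : Finset (Fin k))
    (x : {z : MVertex k 𝒮 // z.1 ∈ Q} → Fin n)
    (y : {z : MVertex k 𝒮 // z.1 ∉ Q} → Fin n) : MVertex k 𝒮 → Fin n :=
  fun z => if h : z.1 ∈ Q then x ⟨z, h⟩ else y ⟨z, h⟩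

lemma mergeXY_bij (𝒮 : Finset (Finset (Fin k))) (Q : Finset (Fin k)) :
    Function.Bijective (fun p : ({z : MVertex k 𝒮 // z.1 ∈ Q} → Fin n) ×
        ({z : MVertex k 𝒮 // z.1 ∉ Q} → Fin n) => mergeXY 𝒮 Q p.1 p.2) := by
  rw [Function.bijective_iff_has_inverse]
  refine ⟨fun φ => ((fun p => φ p.1), (fun p => φ p.1)), fun p => ?_, fun φ => ?_⟩
  · refine Prod.ext (funext fun p' => ?_) (funext fun p' => ?_)
    · show mergeXY 𝒮 Q p.1 p.2 p'.1 = p.1 p'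
      rw [mergeXY, dif_pos p'.2]
    · show mergeXY 𝒮 Q p.1 p.2 p'.1 = p.2 p'
      rw [mergeXY, dif_neg p'.2]
  · funext z
    show (if h : z.1 ∈ Q then _ else _) = φ z
    by_cases h : z.1 ∈ Q
    · rw [dif_pos h]
    · rw [dif_neg h]

def mergeD (𝒮 : Finset (Finset (Fin k))) (Q : Finset (Fin k))
    (x : {z : MVertex k 𝒮 // z.1 ∈ Q} → Fin n)
    (y₀ y₁ : {z : MVertex k 𝒮 // z.1 ∉ Q} → Fin n) : MVertex k (insert Q 𝒮) → Fin n :=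
  fun z' => if h : z'.1 ∈ Q then x ⟨projS 𝒮 Q z', h⟩
    else (if z'.2 ⟨Q, ⟨Finset.mem_insert_self _ _, h⟩⟩ then y₁ else y₀) ⟨projS 𝒮 Q z', h⟩

lemma mergeD_bij (𝒮 : Finset (Finset (Fin k))) (Q : Finset (Fin k)) (hQ : Q ∉ 𝒮) :
    Function.Bijective (fun t : ({z : MVertex k 𝒮 // z.1 ∈ Q} → Fin n) ×
        (({z : MVertex k 𝒮 // z.1 ∉ Q} → Fin n) × ({z : MVertex k 𝒮 // z.1 ∉ Q} → Fin n)) =>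
      mergeD 𝒮 Q t.1 t.2.1 t.2.2) := by
  rw [Function.bijective_iff_has_inverse]
  refine ⟨fun φ' => ((fun p => φ' (liftX 𝒮 Q p.1 p.2)),
      ((fun p => φ' (liftY 𝒮 Q false p.1 p.2)), (fun p => φ' (liftY 𝒮 Q true p.1 p.2)))),
    fun t => ?_, fun φ' => ?_⟩
  · refine Prod.ext (funext fun p => ?_) (Prod.ext (funext fun p => ?_) (funext fun p => ?_))
    · show mergeD 𝒮 Q t.1 t.2.1 t.2.2 (liftX 𝒮 Q p.1 p.2) = t.1 p
      have hc : (liftX 𝒮 Q p.1 p.2).1 ∈ Q := p.2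
      rw [mergeD, dif_pos hc]
      exact congrArg t.1 (Subtype.ext (projS_liftX 𝒮 Q p.1 p.2))
    · show mergeD 𝒮 Q t.1 t.2.1 t.2.2 (liftY 𝒮 Q false p.1 p.2) = t.2.1 p
      have hc : ¬(liftY 𝒮 Q false p.1 p.2).1 ∈ Q := p.2
      rw [mergeD, dif_neg hc, liftY_bit', if_neg Bool.false_ne_true]
      exact congrArg t.2.1 (Subtype.ext (projS_liftY 𝒮 hQ false p.1 p.2))
    · show mergeD 𝒮 Q t.1 t.2.1 t.2.2 (liftY 𝒮 Q true p.1 p.2) = t.2.2 p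
      have hc : ¬(liftY 𝒮 Q true p.1 p.2).1 ∈ Q := p.2
      rw [mergeD, dif_neg hc, liftY_bit', if_pos rfl]
      exact congrArg t.2.2 (Subtype.ext (projS_liftY 𝒮 hQ true p.1 p.2))
  · funext z'
    show (if h : z'.1 ∈ Q then _ else _) = φ' z'
    by_cases h : z'.1 ∈ Q
    · rw [dif_pos h]
      exact congrArg φ' (liftX_projS 𝒮 Q z' h)
    · rw [dif_neg h]
      cases hb : z'.2 ⟨Q, ⟨Finset.mem_insert_self _ _, h⟩⟩
      · rw [if_neg (by simp)]
        have h2 := liftY_projS 𝒮 Q z' h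
        rw [hb] at h2
        exact congrArg φ' h2
      · rw [if_pos rfl]
        have h2 := liftY_projS 𝒮 Q z' h
        rw [hb] at h2
        exact congrArg φ' h2

def extA (𝒮 : Finset (Finset (Fin k))) (Q : Finset (Fin k))
    (a : {Q' // Q' ∈ 𝒮} → Bool) (c : Bool) : {Q' // Q' ∈ insert Q 𝒮} → Bool :=
  fun p => if hp : p.1 = Q then c else a ⟨p.1, (Finset.mem_insert.mp p.2).resolve_left hp⟩

lemma extA_bij (𝒮 : Finset (Finset (Fin k))) (Q : Finset (Fin k)) (hQ : Q ∉ 𝒮) :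
    Function.Bijective (fun pc : ({Q' // Q' ∈ 𝒮} → Bool) × Bool => extA 𝒮 Q pc.1 pc.2) := by
  rw [Function.bijective_iff_has_inverse]
  refine ⟨fun a' => ((fun p => a' ⟨p.1, Finset.mem_insert_of_mem p.2⟩),
      a' ⟨Q, Finset.mem_insert_self _ _⟩), fun pc => ?_, fun a' => ?_⟩
  · refine Prod.ext (funext fun p => ?_) ?_
    · show extA 𝒮 Q pc.1 pc.2 ⟨p.1, Finset.mem_insert_of_mem p.2⟩ = pc.1 p
      rw [extA, dif_neg (fun e : p.1 = Q => hQ (e ▸ p.2))]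
    · show extA 𝒮 Q pc.1 pc.2 ⟨Q, Finset.mem_insert_self _ _⟩ = pc.2
      rw [extA, dif_pos rfl]
  · funext p
    show (if hp : p.1 = Q then _ else _) = a' p
    by_cases hp : p.1 = Q
    · rw [dif_pos hp]
      exact congrArg a' (Subtype.ext hp.symm)
    · rw [dif_neg hp]

end DevAux2
namespace DevAux3
open DevAux DevAux2

variable {k n : ℕ}

lemma restrict_merge (𝒮 : Finset (Finset (Fin k))) (Q : Finset (Fin k))
    (x : {z : MVertex k 𝒮 // z.1 ∈ Q} → Fin n) (y : {z : MVertex k 𝒮 // z.1 ∉ Q} → Fin n)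
    (a : {Q' // Q' ∈ 𝒮} → Bool) :
    tupleRestrict Q (fun i => mergeXY 𝒮 Q x y (Mvert 𝒮 a i)) =
      fun j : {i // i ∈ Q} => x ⟨Mvert 𝒮 a j.1, j.2⟩ :=
  funext fun j => dif_pos j.2

lemma projS_mvert_ext (𝒮 : Finset (Finset (Fin k))) {Q : Finset (Fin k)} (hQ : Q ∉ 𝒮)
    (a : {Q' // Q' ∈ 𝒮} → Bool) (c : Bool) (i : Fin k) :
    projS 𝒮 Q (Mvert (insert Q 𝒮) (extA 𝒮 Q a c) i) = Mvert 𝒮 a i := by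
  refine congrArg (Sigma.mk i) (funext fun p => ?_)
  show extA 𝒮 Q a c ⟨p.1, _⟩ = a ⟨p.1, p.2.1⟩
  rw [extA, dif_neg (fun e : p.1 = Q => hQ (e ▸ p.2.1))]

lemma mergeD_mvert (𝒮 : Finset (Finset (Fin k))) {Q : Finset (Fin k)} (hQ : Q ∉ 𝒮)
    (x : {z : MVertex k 𝒮 // z.1 ∈ Q} → Fin n) (y₀ y₁ : {z : MVertex k 𝒮 // z.1 ∉ Q} → Fin n)
    (a : {Q' // Q' ∈ 𝒮} → Bool) (c : Bool) (i : Fin k) :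
    mergeD 𝒮 Q x y₀ y₁ (Mvert (insert Q 𝒮) (extA 𝒮 Q a c) i) =
      mergeXY 𝒮 Q x (if c then y₁ else y₀) (Mvert 𝒮 a i) := by
  by_cases h : i ∈ Q
  · have hc : (Mvert (insert Q 𝒮) (extA 𝒮 Q a c) i).1 ∈ Q := h
    have hc2 : (Mvert 𝒮 a i).1 ∈ Q := h
    rw [mergeD, dif_pos hc, mergeXY, dif_pos hc2]
    exact congrArg x (Subtype.ext (projS_mvert_ext 𝒮 hQ a c i))
  · have hc : ¬(Mvert (insert Q 𝒮) (extA 𝒮 Q a c) i).1 ∈ Q := h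
    have hc2 : ¬(Mvert 𝒮 a i).1 ∈ Q := h
    rw [mergeD, dif_neg hc, mergeXY, dif_neg hc2]
    have hbit : (Mvert (insert Q 𝒮) (extA 𝒮 Q a c) i).2
        ⟨Q, ⟨Finset.mem_insert_self _ _, hc⟩⟩ = c := dif_pos rfl
    rw [hbit]
    cases c
    · rw [if_neg Bool.false_ne_true]
      exact congrArg y₀ (Subtype.ext (projS_mvert_ext 𝒮 hQ a false i))
    · rw [if_pos rfl]
      exact congrArg y₁ (Subtype.ext (projS_mvert_ext 𝒮 hQ a true i))

noncomputable def gfun (𝒬 𝒮 : Finset (Finset (Fin k))) (d : ℝ) (E : Finset (Finset (Fin n)))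
    (w : (Q : Finset (Fin k)) → (({i // i ∈ Q} → Fin n) → ℝ)) (v : Fin k → Fin n) : ℝ :=
  ((if v ∈ edgeOrd k E then (1 : ℝ) else 0) - d) *
    ∏ Q ∈ 𝒬 \ 𝒮,
      (if Function.Injective (tupleRestrict Q v) then w Q (tupleRestrict Q v) else 0)

noncomputable def Tsum (𝒬 𝒮 : Finset (Finset (Fin k))) (d : ℝ) (E : Finset (Finset (Fin n)))
    (w : (Q : Finset (Fin k)) → (({i // i ∈ Q} → Fin n) → ℝ)) : ℝ :=
  ∑ φ : MVertex k 𝒮 → Fin n, ∏ a : ({Q // Q ∈ 𝒮} → Bool),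
    gfun 𝒬 𝒮 d E w (fun i => φ (Mvert 𝒮 a i))

lemma gfun_split (𝒬 𝒮 : Finset (Finset (Fin k))) {Q : Finset (Fin k)}
    (hQ𝒬 : Q ∈ 𝒬) (hQ𝒮 : Q ∉ 𝒮) (d : ℝ) (E : Finset (Finset (Fin n)))
    (w : (Q : Finset (Fin k)) → (({i // i ∈ Q} → Fin n) → ℝ)) (v : Fin k → Fin n) :
    gfun 𝒬 𝒮 d E w v =
      (if Function.Injective (tupleRestrict Q v) then w Q (tupleRestrict Q v) else 0) *
        gfun 𝒬 (insert Q 𝒮) d E w v := by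
  rw [gfun, gfun, Finset.sdiff_insert, ← Finset.mul_prod_erase (𝒬 \ 𝒮) _
    (Finset.mem_sdiff.mpr ⟨hQ𝒬, hQ𝒮⟩)]
  ring

end DevAux3
namespace DevAux4
open DevAux DevAux2 DevAux3

variable {k n : ℕ}

noncomputable def Ufun (𝒮 : Finset (Finset (Fin k))) (Q : Finset (Fin k))
    (w : (Q : Finset (Fin k)) → (({i // i ∈ Q} → Fin n) → ℝ))
    (x : {z : MVertex k 𝒮 // z.1 ∈ Q} → Fin n) : ℝ :=
  ∏ a : ({Q' // Q' ∈ 𝒮} → Bool),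
    (if Function.Injective (fun j : {i // i ∈ Q} => x ⟨Mvert 𝒮 a j.1, j.2⟩) then
      w Q (fun j : {i // i ∈ Q} => x ⟨Mvert 𝒮 a j.1, j.2⟩) else 0)

noncomputable def Gfun (𝒬 𝒮 : Finset (Finset (Fin k))) (Q : Finset (Fin k)) (d : ℝ)
    (E : Finset (Finset (Fin n))) (w : (Q : Finset (Fin k)) → (({i // i ∈ Q} → Fin n) → ℝ))
    (x : {z : MVertex k 𝒮 // z.1 ∈ Q} → Fin n)
    (y : {z : MVertex k 𝒮 // z.1 ∉ Q} → Fin n) : ℝ :=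
  ∏ a : ({Q' // Q' ∈ 𝒮} → Bool),
    gfun 𝒬 (insert Q 𝒮) d E w (fun i => mergeXY 𝒮 Q x y (Mvert 𝒮 a i))

lemma key_split (𝒬 𝒮 : Finset (Finset (Fin k))) {Q : Finset (Fin k)}
    (hQ𝒬 : Q ∈ 𝒬) (hQ𝒮 : Q ∉ 𝒮) (d : ℝ) (E : Finset (Finset (Fin n)))
    (w : (Q : Finset (Fin k)) → (({i // i ∈ Q} → Fin n) → ℝ))
    (x : {z : MVertex k 𝒮 // z.1 ∈ Q} → Fin n)
    (y : {z : MVertex k 𝒮 // z.1 ∉ Q} → Fin n) :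
    (∏ a : ({Q' // Q' ∈ 𝒮} → Bool),
        gfun 𝒬 𝒮 d E w (fun i => mergeXY 𝒮 Q x y (Mvert 𝒮 a i))) =
      Ufun 𝒮 Q w x * Gfun 𝒬 𝒮 Q d E w x y := by
  rw [Ufun, Gfun, ← Finset.prod_mul_distrib]
  refine Finset.prod_congr rfl fun a _ => ?_
  rw [gfun_split 𝒬 𝒮 hQ𝒬 hQ𝒮 d E w, restrict_merge 𝒮 Q x y a]

lemma Ufun_abs_le (𝒮 : Finset (Finset (Fin k))) (Q : Finset (Fin k))
    (w : (Q : Finset (Fin k)) → (({i // i ∈ Q} → Fin n) → ℝ))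
    (hw : ∀ Q y, -1 ≤ w Q y ∧ w Q y ≤ 1)
    (x : {z : MVertex k 𝒮 // z.1 ∈ Q} → Fin n) : |Ufun 𝒮 Q w x| ≤ 1 := by
  rw [Ufun, Finset.abs_prod]
  refine Finset.prod_le_one (fun a _ => abs_nonneg _) (fun a _ => ?_)
  by_cases h : Function.Injective (fun j : {i // i ∈ Q} => x ⟨Mvert 𝒮 a j.1, j.2⟩)
  · rw [if_pos h]
    exact abs_le.mpr (hw Q _)
  · rw [if_neg h]
    simp

lemma double_prod (𝒬 𝒮 : Finset (Finset (Fin k))) {Q : Finset (Fin k)}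
    (hQ𝒮 : Q ∉ 𝒮) (d : ℝ) (E : Finset (Finset (Fin n)))
    (w : (Q : Finset (Fin k)) → (({i // i ∈ Q} → Fin n) → ℝ))
    (x : {z : MVertex k 𝒮 // z.1 ∈ Q} → Fin n)
    (y₀ y₁ : {z : MVertex k 𝒮 // z.1 ∉ Q} → Fin n) :
    Gfun 𝒬 𝒮 Q d E w x y₀ * Gfun 𝒬 𝒮 Q d E w x y₁ =
      ∏ a' : ({Q' // Q' ∈ insert Q 𝒮} → Bool),
        gfun 𝒬 (insert Q 𝒮) d E w (fun i => mergeD 𝒮 Q x y₀ y₁ (Mvert (insert Q 𝒮) a' i)) := by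
  have h := Fintype.prod_bijective _ (extA_bij 𝒮 Q hQ𝒮)
    (fun pc : ({Q' // Q' ∈ 𝒮} → Bool) × Bool =>
      gfun 𝒬 (insert Q 𝒮) d E w
        (fun i => mergeXY 𝒮 Q x (if pc.2 then y₁ else y₀) (Mvert 𝒮 pc.1 i)))
    (fun a' => gfun 𝒬 (insert Q 𝒮) d E w
      (fun i => mergeD 𝒮 Q x y₀ y₁ (Mvert (insert Q 𝒮) a' i)))
    (fun pc => congrArg _ (funext fun i => (mergeD_mvert 𝒮 hQ𝒮 x y₀ y₁ pc.1 pc.2 i).symm))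
  rw [← h, Fintype.prod_prod_type, Gfun, Gfun, ← Finset.prod_mul_distrib]
  refine Finset.prod_congr rfl fun a _ => ?_
  rw [Fintype.prod_bool, if_pos rfl, if_neg Bool.false_ne_true, mul_comm]

set_option maxHeartbeats 4000000 in
lemma step (𝒬 𝒮 : Finset (Finset (Fin k))) {Q : Finset (Fin k)}
    (hQ𝒬 : Q ∈ 𝒬) (hQ𝒮 : Q ∉ 𝒮) (d : ℝ) (E : Finset (Finset (Fin n)))
    (w : (Q : Finset (Fin k)) → (({i // i ∈ Q} → Fin n) → ℝ))
    (hw : ∀ Q y, -1 ≤ w Q y ∧ w Q y ≤ 1) :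
    (Tsum 𝒬 𝒮 d E w) ^ 2 ≤
      (n : ℝ) ^ (Fintype.card {z : MVertex k 𝒮 // z.1 ∈ Q}) *
        Tsum 𝒬 (insert Q 𝒮) d E w := by
  letI : Fintype (({z : MVertex k 𝒮 // z.1 ∈ Q} → Fin n) × ({z : MVertex k 𝒮 // z.1 ∉ Q} → Fin n)) :=
    instFintypeProd _ _
  letI : Fintype (({z : MVertex k 𝒮 // z.1 ∈ Q} → Fin n) ×
      (({z : MVertex k 𝒮 // z.1 ∉ Q} → Fin n) × ({z : MVertex k 𝒮 // z.1 ∉ Q} → Fin n))) :=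
    instFintypeProd _ _
  have hT : Tsum 𝒬 𝒮 d E w = ∑ x, Ufun 𝒮 Q w x * ∑ y, Gfun 𝒬 𝒮 Q d E w x y := by
    have h := Fintype.sum_bijective _ (mergeXY_bij 𝒮 Q (n := n))
      (fun p => Ufun 𝒮 Q w p.1 * Gfun 𝒬 𝒮 Q d E w p.1 p.2)
      (fun φ => ∏ a : ({Q' // Q' ∈ 𝒮} → Bool), gfun 𝒬 𝒮 d E w (fun i => φ (Mvert 𝒮 a i)))
      (fun p => (key_split 𝒬 𝒮 hQ𝒬 hQ𝒮 d E w p.1 p.2).symm)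
    rw [Tsum, ← h, Fintype.sum_prod_type]
    refine Finset.sum_congr rfl fun x _ => ?_
    rw [Finset.mul_sum]
  have hcs := Finset.sum_mul_sq_le_sq_mul_sq Finset.univ (fun x => Ufun 𝒮 Q w x)
    (fun x => ∑ y, Gfun 𝒬 𝒮 Q d E w x y)
  have h1 : ∑ x, (Ufun 𝒮 Q w x) ^ 2 ≤
      (n : ℝ) ^ (Fintype.card {z : MVertex k 𝒮 // z.1 ∈ Q}) := by
    have hb : ∀ x ∈ Finset.univ, (Ufun 𝒮 Q w x) ^ 2 ≤ (1 : ℝ) := by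
      intro x _
      rw [← sq_abs]
      exact pow_le_one₀ (abs_nonneg _) (Ufun_abs_le 𝒮 Q w hw x)
    calc ∑ x, (Ufun 𝒮 Q w x) ^ 2 ≤ Finset.univ.card • (1 : ℝ) :=
          Finset.sum_le_card_nsmul _ _ _ hb
      _ = (Fintype.card ({z : MVertex k 𝒮 // z.1 ∈ Q} → Fin n) : ℝ) := by
          rw [Finset.card_univ, nsmul_eq_mul, mul_one]
      _ = (n : ℝ) ^ (Fintype.card {z : MVertex k 𝒮 // z.1 ∈ Q}) := by
          rw [Fintype.card_fun, Fintype.card_fin, Nat.cast_pow]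
  have h2 : (0 : ℝ) ≤ ∑ x, (∑ y, Gfun 𝒬 𝒮 Q d E w x y) ^ 2 :=
    Finset.sum_nonneg fun x _ => sq_nonneg _
  have hE : (∑ x, ∑ y₀, ∑ y₁, Gfun 𝒬 𝒮 Q d E w x y₀ * Gfun 𝒬 𝒮 Q d E w x y₁) =
      Tsum 𝒬 (insert Q 𝒮) d E w := by
    have h := Fintype.sum_bijective _ (mergeD_bij 𝒮 Q hQ𝒮 (n := n))
      (fun t => ∏ a' : ({Q' // Q' ∈ insert Q 𝒮} → Bool), gfun 𝒬 (insert Q 𝒮) d E w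
        (fun i => mergeD 𝒮 Q t.1 t.2.1 t.2.2 (Mvert (insert Q 𝒮) a' i)))
      (fun φ => ∏ a' : ({Q' // Q' ∈ insert Q 𝒮} → Bool), gfun 𝒬 (insert Q 𝒮) d E w
        (fun i => φ (Mvert (insert Q 𝒮) a' i)))
      (fun t => rfl)
    rw [Tsum, ← h, Fintype.sum_prod_type]
    refine Finset.sum_congr rfl fun x _ => ?_
    rw [Fintype.sum_prod_type]
    refine Finset.sum_congr rfl fun y₀ _ => Finset.sum_congr rfl fun y₁ _ =>
      double_prod 𝒬 𝒮 hQ𝒮 d E w x y₀ y₁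
  calc (Tsum 𝒬 𝒮 d E w) ^ 2
      = (∑ x, Ufun 𝒮 Q w x * ∑ y, Gfun 𝒬 𝒮 Q d E w x y) ^ 2 := by rw [hT]
    _ ≤ (∑ x, (Ufun 𝒮 Q w x) ^ 2) * (∑ x, (∑ y, Gfun 𝒬 𝒮 Q d E w x y) ^ 2) := hcs
    _ ≤ (n : ℝ) ^ (Fintype.card {z : MVertex k 𝒮 // z.1 ∈ Q}) *
          (∑ x, (∑ y, Gfun 𝒬 𝒮 Q d E w x y) ^ 2) := mul_le_mul_of_nonneg_right h1 h2
    _ = (n : ℝ) ^ (Fintype.card {z : MVertex k 𝒮 // z.1 ∈ Q}) *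
          Tsum 𝒬 (insert Q 𝒮) d E w := by
        rw [← hE]
        congr 1
        refine Finset.sum_congr rfl fun x _ => ?_
        rw [sq, Finset.sum_mul_sum]

end DevAux4

namespace DevAux5
open DevAux DevAux2 DevAux3 DevAux4

variable {k n : ℕ}

instance instEmptyQ : IsEmpty {Q' // Q' ∈ (∅ : Finset (Finset (Fin k)))} :=
  ⟨fun p => absurd p.2 (Finset.notMem_empty _)⟩

instance instEmptyM (i : Fin k) :
    IsEmpty {Q // Q ∈ (∅ : Finset (Finset (Fin k))) ∧ i ∉ Q} :=
  ⟨fun p => absurd p.2.1 (Finset.notMem_empty _)⟩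

lemma card_MVertex_empty : Fintype.card (MVertex k (∅ : Finset (Finset (Fin k)))) = k := by
  rw [Fintype.card_sigma]
  have h : ∀ i : Fin k,
      Fintype.card ({Q // Q ∈ (∅ : Finset (Finset (Fin k))) ∧ i ∉ Q} → Bool) = 1 := by
    intro i
    rw [Fintype.card_fun]
    simp
  simp only [h, Finset.sum_const, Finset.card_univ, Fintype.card_fin, smul_eq_mul, mul_one]

lemma mvertex_empty_bij :
    Function.Bijective (fun (v : Fin k → Fin n) (z : MVertex k (∅ : Finset (Finset (Fin k)))) =>
      v z.1) := by
  rw [Function.bijective_iff_has_inverse]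
  refine ⟨fun φ i => φ ⟨i, isEmptyElim⟩, fun v => rfl, fun φ => ?_⟩
  funext z
  show φ ⟨z.1, isEmptyElim⟩ = φ z
  exact congrArg φ (congrArg (Sigma.mk z.1) (funext fun p => isEmptyElim p))

lemma Tsum_empty (𝒬 : Finset (Finset (Fin k))) (d : ℝ) (E : Finset (Finset (Fin n)))
    (w : (Q : Finset (Fin k)) → (({i // i ∈ Q} → Fin n) → ℝ)) :
    Tsum 𝒬 (∅ : Finset (Finset (Fin k))) d E w =
      ∑ v : Fin k → Fin n,
        ((if v ∈ edgeOrd k E then (1 : ℝ) else 0) - d) * wProd 𝒬 w v := by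
  rw [Tsum]
  refine (Fintype.sum_bijective _ mvertex_empty_bij _ _ fun v => ?_).symm
  rw [Fintype.prod_unique, gfun, Finset.sdiff_empty]
  rfl

lemma Tsum_full (𝒬 : Finset (Finset (Fin k))) (d : ℝ) (E : Finset (Finset (Fin n)))
    (w : (Q : Finset (Fin k)) → (({i // i ∈ Q} → Fin n) → ℝ)) :
    Tsum 𝒬 𝒬 d E w =
      ∑ φ : MVertex k 𝒬 → Fin n, ∏ a : ({Q : Finset (Fin k) // Q ∈ 𝒬} → Bool),
        ((if (fun i => φ (Mvert 𝒬 a i)) ∈ edgeOrd k E then (1 : ℝ) else 0) - d) := by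
  rw [Tsum]
  refine Finset.sum_congr rfl fun φ _ => Finset.prod_congr rfl fun a _ => ?_
  rw [gfun, Finset.sdiff_self, Finset.prod_empty, mul_one]

lemma invariant (𝒬 : Finset (Finset (Fin k))) (d : ℝ) (E : Finset (Finset (Fin n)))
    (w : (Q : Finset (Fin k)) → (({i // i ∈ Q} → Fin n) → ℝ))
    (hw : ∀ Q y, -1 ≤ w Q y ∧ w Q y ≤ 1) (hn : 1 ≤ n) :
    ∀ 𝒮 : Finset (Finset (Fin k)), 𝒮 ⊆ 𝒬 →
      (n : ℝ) ^ (Fintype.card (MVertex k 𝒮)) * |Tsum 𝒬 ∅ d E w| ^ (2 ^ 𝒮.card) ≤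
        (n : ℝ) ^ (k * 2 ^ 𝒮.card) * |Tsum 𝒬 𝒮 d E w| := by
  intro 𝒮
  induction 𝒮 using Finset.induction_on with
  | empty =>
    intro _
    rw [card_MVertex_empty, Finset.card_empty, pow_zero, pow_one, mul_one]
  | @insert Q 𝒮 hQ𝒮 IH =>
    intro hsub
    have h𝒮 : 𝒮 ⊆ 𝒬 := (Finset.subset_insert Q 𝒮).trans hsub
    have hQ𝒬 : Q ∈ 𝒬 := hsub (Finset.mem_insert_self Q 𝒮)
    have hnR : (0 : ℝ) < (n : ℝ) := by exact_mod_cast Nat.lt_of_lt_of_le Nat.zero_lt_one hn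
    have hIH := IH h𝒮
    set M := Fintype.card (MVertex k 𝒮) with hM
    set M' := Fintype.card (MVertex k (insert Q 𝒮)) with hM'
    set cX := Fintype.card {z : MVertex k 𝒮 // z.1 ∈ Q} with hcXdef
    set s := 𝒮.card with hs
    set P := |Tsum 𝒬 ∅ d E w| with hP
    set T := Tsum 𝒬 𝒮 d E w with hT
    set R := |Tsum 𝒬 (insert Q 𝒮) d E w| with hR
    have hA : (0 : ℝ) ≤ (n : ℝ) ^ M * P ^ (2 ^ s) := by positivity
    have hstep' : T ^ 2 ≤ (n : ℝ) ^ cX * R :=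
      (step 𝒬 𝒮 hQ𝒬 hQ𝒮 d E w hw).trans
        (mul_le_mul_of_nonneg_left (le_abs_self _) (by positivity))
    have hcard : M' + cX = 2 * M := card_insert 𝒮 Q hQ𝒮
    have hcardins : (insert Q 𝒮).card = s + 1 := Finset.card_insert_of_notMem hQ𝒮
    have eM : M + M = M' + cX := by omega
    have e2 : 2 ^ s + 2 ^ s = 2 ^ (s + 1) := by rw [pow_succ]; ring
    have e3 : k * 2 ^ s + k * 2 ^ s = k * 2 ^ (s + 1) := by rw [pow_succ]; ring
    have hfinal : (n : ℝ) ^ (M' + cX) * P ^ (2 ^ (s + 1)) ≤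
        (n : ℝ) ^ (k * 2 ^ (s + 1) + cX) * R := by
      calc (n : ℝ) ^ (M' + cX) * P ^ (2 ^ (s + 1))
          = ((n : ℝ) ^ M * P ^ (2 ^ s)) * ((n : ℝ) ^ M * P ^ (2 ^ s)) := by
            rw [← eM, ← e2, pow_add, pow_add]; ring
        _ ≤ ((n : ℝ) ^ (k * 2 ^ s) * |T|) * ((n : ℝ) ^ (k * 2 ^ s) * |T|) :=
            mul_self_le_mul_self hA hIH
        _ = (n : ℝ) ^ (k * 2 ^ s + k * 2 ^ s) * T ^ 2 := by
            rw [pow_add, ← sq_abs T]; ring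
        _ ≤ (n : ℝ) ^ (k * 2 ^ s + k * 2 ^ s) * ((n : ℝ) ^ cX * R) :=
            mul_le_mul_of_nonneg_left hstep' (by positivity)
        _ = (n : ℝ) ^ (k * 2 ^ (s + 1) + cX) * R := by
            rw [← e3, pow_add, pow_add]; ring
    rw [hcardins]
    have h5 : (n : ℝ) ^ cX * ((n : ℝ) ^ M' * P ^ (2 ^ (s + 1))) ≤
        (n : ℝ) ^ cX * ((n : ℝ) ^ (k * 2 ^ (s + 1)) * R) := by
      calc (n : ℝ) ^ cX * ((n : ℝ) ^ M' * P ^ (2 ^ (s + 1)))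
          = (n : ℝ) ^ (M' + cX) * P ^ (2 ^ (s + 1)) := by rw [pow_add]; ring
        _ ≤ (n : ℝ) ^ (k * 2 ^ (s + 1) + cX) * R := hfinal
        _ = (n : ℝ) ^ cX * ((n : ℝ) ^ (k * 2 ^ (s + 1)) * R) := by rw [pow_add]; ring
    exact le_of_mul_le_mul_left h5 (by positivity)

end DevAux5

/-- the "functional" version of `DEV` implies `WDISC`. -/
theorem dev_implies_wdisc (k : ℕ) (hk : 2 ≤ k) (𝒬 : Finset (Finset (Fin k)))
    (h𝒬 : Finset.univ ∉ 𝒬) (d : ℝ) (hd0 : 0 ≤ d) (hd1 : d ≤ 1) (δ : ℝ) (hδ : 0 < δ) :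
    ∃ ε > (0 : ℝ), ∃ n₀ : ℕ, ∀ n ≥ n₀, ∀ E : Finset (Finset (Fin n)),
      (∀ e ∈ E, e.card = k) →
      |∑ φ : MVertex k 𝒬 → Fin n, ∏ a : ({Q : Finset (Fin k) // Q ∈ 𝒬} → Bool),
          ((if (fun i => φ (Mvert 𝒬 a i)) ∈ edgeOrd k E then (1 : ℝ) else 0) - d)| ≤
        ε * (n : ℝ) ^ Fintype.card (MVertex k 𝒬) →
      WDISC k n 𝒬 d δ E := by
  classical
  refine ⟨δ ^ (2 ^ 𝒬.card), pow_pos hδ _, 1, fun n hn E _hE hDEV => fun w hw => ?_⟩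
  have hnR : (0 : ℝ) < (n : ℝ) := by exact_mod_cast Nat.lt_of_lt_of_le Nat.zero_lt_one hn
  have hDEV' : |DevAux3.Tsum 𝒬 𝒬 d E w| ≤
      δ ^ (2 ^ 𝒬.card) * (n : ℝ) ^ (Fintype.card (MVertex k 𝒬)) := by
    rw [DevAux5.Tsum_full]
    exact hDEV
  have hinv := DevAux5.invariant 𝒬 d E w hw hn 𝒬 (Finset.Subset.refl _)
  set ℓ := 𝒬.card with hℓ
  set M := Fintype.card (MVertex k 𝒬) with hMdef
  set P := |DevAux3.Tsum 𝒬 ∅ d E w| with hPdef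
  have h6 : (n : ℝ) ^ M * P ^ (2 ^ ℓ) ≤
      (n : ℝ) ^ (k * 2 ^ ℓ) * (δ ^ (2 ^ ℓ) * (n : ℝ) ^ M) :=
    hinv.trans (mul_le_mul_of_nonneg_left hDEV' (by positivity))
  have h7 : P ^ (2 ^ ℓ) ≤ δ ^ (2 ^ ℓ) * (n : ℝ) ^ (k * 2 ^ ℓ) := by
    have h6' : (n : ℝ) ^ M * P ^ (2 ^ ℓ) ≤
        (n : ℝ) ^ M * (δ ^ (2 ^ ℓ) * (n : ℝ) ^ (k * 2 ^ ℓ)) := h6.trans_eq (by ring)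
    exact le_of_mul_le_mul_left h6' (by positivity)
  have h8 : P ≤ δ * (n : ℝ) ^ k := by
    refine le_of_pow_le_pow_left₀ (by positivity : (0:ℕ) < 2 ^ ℓ).ne' (by positivity) ?_
    calc P ^ (2 ^ ℓ) ≤ δ ^ (2 ^ ℓ) * ((n : ℝ) ^ k) ^ (2 ^ ℓ) := by
          rw [← pow_mul]; exact h7
      _ = (δ * (n : ℝ) ^ k) ^ (2 ^ ℓ) := (mul_pow _ _ _).symm
  rw [← DevAux5.Tsum_empty 𝒬 d E w]
  exact h8
end

section
/- For every integer k ≥ 2, every set system 𝒬 ⊆ 𝒫([k]) \ {[k]}, every d ∈ [0,1], and every δ > 0, there exists ε > 0 such that for all sufficiently large n, every n-vertex k-uniform hypergraph H that satisfies DISC_{𝒬,d}(ε) also satisfies DEV_{𝒬,d}(δ). -/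
open Finset
open scoped Classical

lemma card_eqpair_le (α : Type) [Fintype α] (n : ℕ) {i j : α} (hij : i ≠ j) :
    (Finset.univ.filter fun f : α → Fin n => f i = f j).card ≤ n ^ (Fintype.card α - 1) := by
  classical
  have := Finset.card_le_card_of_injOn (f := fun f : α → Fin n => (fun x : {x : α // x ≠ j} => f x.1))
    (s := Finset.univ.filter fun f : α → Fin n => f i = f j) (t := Finset.univ)
    (fun _ _ => Finset.mem_univ _)
    (by
      intro f hf g hg h
      simp only [Finset.mem_coe, Finset.mem_filter] at hf hg
      funext x
      by_cases hx : x = j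
      · subst hx
        have h1 : f i = g i := congrFun h ⟨i, hij⟩
        rw [hf.2] at h1; rw [hg.2] at h1; exact h1
      · exact congrFun h ⟨x, hx⟩)
  calc (Finset.univ.filter fun f : α → Fin n => f i = f j).card ≤ Finset.univ.card := this
    _ = Fintype.card ({x : α // x ≠ j} → Fin n) := Finset.card_univ
    _ ≤ n ^ (Fintype.card α - 1) := by
        rw [Fintype.card_fun]
        simp [Fintype.card_subtype_compl, Fintype.card_fin]

lemma card_noninj_le (α : Type) [Fintype α] (n : ℕ) (B : Finset (α → Fin n))
    (hB : ∀ f ∈ B, ¬ Function.Injective f) :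
    B.card ≤ (Fintype.card α)^2 * n ^ (Fintype.card α - 1) := by
  classical
  have hsub : B ⊆
      Finset.univ.offDiag.biUnion
        (fun p => Finset.univ.filter fun f : α → Fin n => f p.1 = f p.2) := by
    intro f hf
    obtain ⟨a, b, hab, hne⟩ := Function.not_injective_iff.mp (hB f hf)
    exact Finset.mem_biUnion.mpr ⟨(a, b), Finset.mem_offDiag.mpr ⟨Finset.mem_univ _, Finset.mem_univ _, hne⟩,
      Finset.mem_filter.mpr ⟨Finset.mem_univ _, hab⟩⟩
  calc B.card ≤ _ := Finset.card_le_card hsub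
    _ ≤ ∑ p ∈ Finset.univ.offDiag, (Finset.univ.filter fun f : α → Fin n => f p.1 = f p.2).card :=
        Finset.card_biUnion_le
    _ ≤ ∑ _p ∈ Finset.univ.offDiag, n ^ (Fintype.card α - 1) := by
        apply Finset.sum_le_sum
        intro p hp
        exact card_eqpair_le α n (Finset.mem_offDiag.mp hp).2.2
    _ ≤ (Fintype.card α)^2 * n ^ (Fintype.card α - 1) := by
        rw [Finset.sum_const, smul_eq_mul]
        apply Nat.mul_le_mul_right
        calc Finset.univ.offDiag.card ≤ (Finset.univ : Finset α).card * Finset.univ.card := by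
              rw [Finset.offDiag_card]; omega
          _ = (Fintype.card α)^2 := by rw [Finset.card_univ, sq]

set_option maxHeartbeats 1600000 in
lemma core_disc_s6 (k n : ℕ) (𝒬 : Finset (Finset (Fin k))) (d ε : ℝ) (hd0 : 0 ≤ d) (hd1 : d ≤ 1)
    (E : Finset (Finset (Fin n))) (hE : ∀ e ∈ E, e.card = k) (hD : DISC k n 𝒬 d ε E)
    {ι : Type} (S : Finset ι) (u : ι → (Fin k → Fin n) → (Fin k → Fin n))
    (Qa : ι → Finset (Fin k)) (hQa : ∀ a ∈ S, Qa a ∈ 𝒬)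
    (hdep : ∀ a ∈ S, ∀ v v' : Fin k → Fin n,
      tupleRestrict (Qa a) v = tupleRestrict (Qa a) v' → u a v = u a v') :
    |∑ v : Fin k → Fin n, ((if Finset.image v Finset.univ ∈ E then (1:ℝ) else 0) - d) *
        ∏ a ∈ S, (if Finset.image (u a v) Finset.univ ∈ E then (1:ℝ) else 0)|
      ≤ ε * (n:ℝ)^k + (k:ℝ)^2 * (n:ℝ)^(k-1) := by
  classical
  -- the directed hypergraphs
  set G : (Q : Finset (Fin k)) → Set ({i // i ∈ Q} → Fin n) := fun Q =>
    {y | ∀ a ∈ S, Qa a = Q → ∀ v : Fin k → Fin n,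
        tupleRestrict Q v = y → Finset.image (u a v) Finset.univ ∈ E} with hG
  -- the product of indicators is an indicator of membership
  have key : ∀ v : Fin k → Fin n,
      (∏ a ∈ S, (if Finset.image (u a v) Finset.univ ∈ E then (1:ℝ) else 0)) =
        (if ∀ Q ∈ 𝒬, tupleRestrict Q v ∈ G Q then (1:ℝ) else 0) := by
    intro v
    rw [Finset.prod_boole]
    congr 1
    simp only [eq_iff_iff]
    constructor
    · intro h Q hQ
      intro a ha haQ v' hv'
      have : u a v' = u a v := hdep a ha v' v (by rw [haQ]; exact hv')
      rw [this]; exact h a ha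
    · intro h a ha
      exact h (Qa a) (hQa a ha) a ha rfl v rfl
  -- the set of supported (not necessarily injective) tuples
  set P : Finset (Fin k → Fin n) :=
    Finset.univ.filter (fun v => ∀ Q ∈ 𝒬, tupleRestrict Q v ∈ G Q) with hP
  have hsum : ∑ v : Fin k → Fin n, ((if Finset.image v Finset.univ ∈ E then (1:ℝ) else 0) - d) *
        ∏ a ∈ S, (if Finset.image (u a v) Finset.univ ∈ E then (1:ℝ) else 0) =
      ∑ v ∈ P, ((if Finset.image v Finset.univ ∈ E then (1:ℝ) else 0) - d) := by
    rw [hP, Finset.sum_filter]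
    apply Finset.sum_congr rfl
    intro v _
    rw [key v]
    by_cases h : ∀ Q ∈ 𝒬, tupleRestrict Q v ∈ G Q <;> simp [h]
  -- split P by injectivity
  set A : Finset (Fin k → Fin n) := P.filter (fun v => Function.Injective v) with hA
  set B : Finset (Fin k → Fin n) := P.filter (fun v => ¬ Function.Injective v) with hB
  have hPsplit : ∑ v ∈ P, ((if Finset.image v Finset.univ ∈ E then (1:ℝ) else 0) - d) =
      (∑ v ∈ A, ((if Finset.image v Finset.univ ∈ E then (1:ℝ) else 0) - d)) +
      (∑ v ∈ B, ((if Finset.image v Finset.univ ∈ E then (1:ℝ) else 0) - d)) :=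
    (Finset.sum_filter_add_sum_filter_not P _ _).symm
  -- non-injective tuples have no edge image
  have himg : ∀ v : Fin k → Fin n, ¬ Function.Injective v →
      Finset.image v Finset.univ ∉ E := by
    intro v hv hmem
    have hcard : (Finset.image v Finset.univ).card = k := hE _ hmem
    have : Set.InjOn v ↑(Finset.univ : Finset (Fin k)) := by
      rw [← Finset.card_image_iff]
      rw [hcard, Finset.card_univ, Fintype.card_fin]
    exact hv fun a b hab => this (by simp) (by simp) hab
  have hBsum : ∑ v ∈ B, ((if Finset.image v Finset.univ ∈ E then (1:ℝ) else 0) - d) =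
      - d * B.card := by
    have hterm : ∀ v ∈ B, ((if Finset.image v Finset.univ ∈ E then (1:ℝ) else 0) - d) = -d := by
      intro v hv
      rw [hB, Finset.mem_filter] at hv
      rw [if_neg (himg v hv.2)]
      ring
    rw [Finset.sum_congr rfl hterm, Finset.sum_const, nsmul_eq_mul]
    ring
  have hAsum : ∑ v ∈ A, ((if Finset.image v Finset.univ ∈ E then (1:ℝ) else 0) - d) =
      ((A.filter (fun v => Finset.image v Finset.univ ∈ E)).card : ℝ) - d * A.card := by
    rw [Finset.sum_sub_distrib, Finset.sum_boole, Finset.sum_const, nsmul_eq_mul]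
    ring
  have h1 : edgeOrd k E ∩ supportedTuples 𝒬 G =
      ↑(A.filter (fun v => Finset.image v Finset.univ ∈ E)) := by
    ext v
    simp only [Set.mem_inter_iff, edgeOrd, supportedTuples, Set.mem_setOf_eq, Finset.coe_filter,
      hA, hP, Finset.mem_filter, Finset.mem_univ, true_and]
    tauto
  have h2 : supportedTuples 𝒬 G = ↑A := by
    ext v
    simp only [supportedTuples, Set.mem_setOf_eq, Finset.coe_filter, hA, hP,
      Finset.mem_filter, Finset.mem_univ, true_and]
    tauto
  have hdisc := hD G
  rw [h1, h2, Set.ncard_coe_finset, Set.ncard_coe_finset] at hdisc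
  have hBcard : (B.card : ℝ) ≤ (k:ℝ)^2 * (n:ℝ)^(k-1) := by
    have h2 := card_noninj_le (Fin k) n B (by
      intro f hf
      rw [hB, Finset.mem_filter] at hf
      exact hf.2)
    rw [Fintype.card_fin] at h2
    exact_mod_cast h2
  rw [hsum, hPsplit, hBsum, hAsum]
  calc |((A.filter (fun v => Finset.image v Finset.univ ∈ E)).card : ℝ) - d * A.card +
        (- d * B.card)|
      ≤ |((A.filter (fun v => Finset.image v Finset.univ ∈ E)).card : ℝ) - d * A.card| +
        |(- d * B.card)| := abs_add_le _ _
    _ ≤ ε * (n:ℝ)^k + (k:ℝ)^2 * (n:ℝ)^(k-1) := by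
        apply add_le_add hdisc
        rw [abs_mul, abs_neg, abs_of_nonneg hd0, abs_of_nonneg (by positivity : (0:ℝ) ≤ (B.card : ℝ))]
        calc d * B.card ≤ 1 * ((k:ℝ)^2 * (n:ℝ)^(k-1)) := by
              apply mul_le_mul hd1 hBcard (by positivity) zero_le_one
          _ = (k:ℝ)^2 * (n:ℝ)^(k-1) := one_mul _

/-- Index type for the "extra" vertices of `M_𝒬`. -/
abbrev PsiT (k : ℕ) (𝒬 : Finset (Finset (Fin k))) : Type :=
  Σ i : Fin k, {b : {Q : Finset (Fin k) // Q ∈ 𝒬 ∧ i ∉ Q} → Bool // b ≠ fun _ => false}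

noncomputable def evEq (k : ℕ) (𝒬 : Finset (Finset (Fin k))) :
    MVertex k 𝒬 ≃ (Fin k ⊕ PsiT k 𝒬) where
  toFun m := if h : m.2 = fun _ => false then Sum.inl m.1 else Sum.inr ⟨m.1, ⟨m.2, h⟩⟩
  invFun s := Sum.elim (fun i => ⟨i, fun _ => false⟩) (fun q => ⟨q.1, q.2.1⟩) s
  left_inv m := by
    simp only []
    by_cases h : m.2 = fun _ => false
    · rw [dif_pos h]
      exact Sigma.ext rfl (heq_of_eq h.symm)
    · rw [dif_neg h]
      rfl
  right_inv s := by
    cases s with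
    | inl i => simp
    | inr q =>
      simp only [Sum.elim_inr]
      exact dif_neg q.2.2

lemma MEdge_injective {k : ℕ} {𝒬 : Finset (Finset (Fin k))} (h𝒬 : Finset.univ ∉ 𝒬) :
    Function.Injective (MEdge 𝒬) := by
  intro a a' h
  funext Q
  have hQuniv : Q.1 ≠ Finset.univ := fun he => h𝒬 (he ▸ Q.2)
  have : ¬ ∀ i : Fin k, i ∈ Q.1 := fun hall => hQuniv (Finset.eq_univ_iff_forall.mpr hall)
  push_neg at this
  obtain ⟨i, hi⟩ := this
  have hmem : Mvert 𝒬 a i ∈ MEdge 𝒬 a' := by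
    rw [← h]
    exact Finset.mem_image_of_mem _ (Finset.mem_univ i)
  rw [MEdge, Finset.mem_image] at hmem
  obtain ⟨i', _, hi'⟩ := hmem
  have hfst : i' = i := congrArg Sigma.fst hi'
  subst hfst
  have hsnd : (fun R : {R : Finset (Fin k) // R ∈ 𝒬 ∧ i' ∉ R} => a' ⟨R.1, R.2.1⟩) =
      (fun R : {R : Finset (Fin k) // R ∈ 𝒬 ∧ i' ∉ R} => a ⟨R.1, R.2.1⟩) := by
    have := (Sigma.mk.inj_iff.mp hi').2
    exact eq_of_heq this
  have := congrFun hsnd ⟨Q.1, ⟨Q.2, hi⟩⟩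
  simpa using this.symm

lemma prod_MEdges {k : ℕ} (𝒬 : Finset (Finset (Fin k))) (h𝒬 : Finset.univ ∉ 𝒬)
    (W : Finset (MVertex k 𝒬) → ℝ) :
    ∏ f ∈ MEdges 𝒬, W f = ∏ a : {Q : Finset (Fin k) // Q ∈ 𝒬} → Bool, W (MEdge 𝒬 a) := by
  rw [MEdges, Finset.prod_image]
  intro a _ a' _ h
  exact MEdge_injective h𝒬 h

/-- The tuple `v_a` determined by the shared part `v` and the extra part `ψ`. -/
noncomputable def tup {k n : ℕ} (𝒬 : Finset (Finset (Fin k)))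
    (a : {Q : Finset (Fin k) // Q ∈ 𝒬} → Bool) (ψ : PsiT k 𝒬 → Fin n) (v : Fin k → Fin n) :
    Fin k → Fin n := fun i =>
  if h : (fun Q : {Q : Finset (Fin k) // Q ∈ 𝒬 ∧ i ∉ Q} => a ⟨Q.1, Q.2.1⟩) =
      (fun _ => false) then v i
  else ψ ⟨i, ⟨_, h⟩⟩

noncomputable def phiEquiv (k n : ℕ) (𝒬 : Finset (Finset (Fin k))) :
    ((PsiT k 𝒬 → Fin n) × (Fin k → Fin n)) ≃ (MVertex k 𝒬 → Fin n) where
  toFun p := fun m => Sum.elim p.2 p.1 (evEq k 𝒬 m)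
  invFun φ := (fun q => φ ⟨q.1, q.2.1⟩, fun i => φ ⟨i, fun _ => false⟩)
  left_inv p := by
    ext x
    · simp only []
      rw [show evEq k 𝒬 ⟨x.1, x.2.1⟩ = Sum.inr ⟨x.1, ⟨x.2.1, x.2.2⟩⟩ from dif_neg x.2.2]
      rfl
    · simp only []
      rw [show evEq k 𝒬 ⟨x, fun _ => false⟩ = Sum.inl x from dif_pos rfl]
      rfl
  right_inv φ := by
    funext m
    simp only []
    have h1 : ∀ s : Fin k ⊕ PsiT k 𝒬,
        Sum.elim (fun i => φ ⟨i, fun _ => false⟩) (fun q => φ ⟨q.1, q.2.1⟩) s =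
          φ ((evEq k 𝒬).symm s) := by
      intro s; cases s <;> rfl
    rw [h1, Equiv.symm_apply_apply]

lemma phiEquiv_Mvert {k n : ℕ} (𝒬 : Finset (Finset (Fin k)))
    (a : {Q : Finset (Fin k) // Q ∈ 𝒬} → Bool) (ψ : PsiT k 𝒬 → Fin n) (v : Fin k → Fin n)
    (i : Fin k) :
    phiEquiv k n 𝒬 (ψ, v) (Mvert 𝒬 a i) = tup 𝒬 a ψ v i := by
  show Sum.elim v ψ (evEq k 𝒬 ⟨i, fun Q => a ⟨Q.1, Q.2.1⟩⟩) = _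
  rw [tup]
  by_cases h : (fun Q : {Q : Finset (Fin k) // Q ∈ 𝒬 ∧ i ∉ Q} => a ⟨Q.1, Q.2.1⟩) =
      (fun _ => false)
  · rw [dif_pos h]
    rw [show evEq k 𝒬 ⟨i, fun Q => a ⟨Q.1, Q.2.1⟩⟩ = Sum.inl i from dif_pos h]
    rfl
  · rw [dif_neg h]
    rw [show evEq k 𝒬 ⟨i, fun Q => a ⟨Q.1, Q.2.1⟩⟩ = Sum.inr ⟨i, ⟨_, h⟩⟩ from dif_neg h]
    rfl

lemma tup_false {k n : ℕ} (𝒬 : Finset (Finset (Fin k))) (ψ : PsiT k 𝒬 → Fin n)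
    (v : Fin k → Fin n) : tup 𝒬 (fun _ => false) ψ v = v := by
  funext i
  rw [tup, dif_pos rfl]

set_option maxHeartbeats 1000000 in
/-- `DISC ⟹ DEV`. -/
theorem disc_implies_dev (k : ℕ) (hk : 2 ≤ k) (𝒬 : Finset (Finset (Fin k)))
    (h𝒬 : Finset.univ ∉ 𝒬) (d : ℝ) (hd0 : 0 ≤ d) (hd1 : d ≤ 1) (δ : ℝ) (hδ : 0 < δ) :
    ∃ ε > (0 : ℝ), ∃ n₀ : ℕ, ∀ n ≥ n₀, ∀ E : Finset (Finset (Fin n)),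
      (∀ e ∈ E, e.card = k) → DISC k n 𝒬 d ε E → DEV k n 𝒬 d δ E := by
  classical
  haveI : DecidableEq (PsiT k 𝒬) := Classical.decEq _
  set V : ℕ := Fintype.card (MVertex k 𝒬) with hV
  set cΨ : ℕ := Fintype.card (PsiT k 𝒬) with hcΨ
  set A : ℕ := Fintype.card ({Q : Finset (Fin k) // Q ∈ 𝒬} → Bool) with hA
  have hVsum : V = k + cΨ := by
    rw [hV, Fintype.card_congr (evEq k 𝒬), Fintype.card_sum, Fintype.card_fin, hcΨ]
  set C : ℝ := 2 ^ A with hC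
  have hC0 : (0:ℝ) < C := by positivity
  set D : ℝ := C * (k:ℝ)^2 + (V:ℝ)^2 with hD
  have hD0 : 0 ≤ D := by positivity
  refine ⟨δ / (2 * C), by positivity, ⌈2 * D / δ⌉₊ + 1, ?_⟩
  intro n hn E hE hDISC
  set ε : ℝ := δ / (2 * C) with hε
  set g : (Fin k → Fin n) → ℝ :=
    fun u => (if Finset.image u Finset.univ ∈ E then (1:ℝ) else 0) - d with hg
  have hgabs : ∀ u, |g u| ≤ 1 := by
    intro u
    rw [hg]
    dsimp only
    split
    · rw [abs_of_nonneg (by linarith)]; linarith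
    · rw [abs_of_nonpos (by linarith)]; linarith
  set F : (MVertex k 𝒬 → Fin n) → ℝ :=
    fun φ => ∏ a : {Q : Finset (Fin k) // Q ∈ 𝒬} → Bool,
      g (fun i => φ (Mvert 𝒬 a i)) with hF
  have hFabs : ∀ φ, |F φ| ≤ 1 := by
    intro φ
    rw [hF]
    dsimp only
    rw [Finset.abs_prod]
    exact Finset.prod_le_one (fun a _ => abs_nonneg _) (fun a _ => hgabs _)
  have hterm : ∀ φ : MVertex k 𝒬 → Fin n,
      (∏ f ∈ MEdges 𝒬, ((if Finset.image φ f ∈ E then (1:ℝ) else 0) - d)) = F φ := by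
    intro φ
    rw [hF]
    dsimp only
    rw [prod_MEdges 𝒬 h𝒬]
    apply Finset.prod_congr rfl
    intro a _
    rw [hg]
    dsimp only
    have himg : Finset.image φ (MEdge 𝒬 a) =
        Finset.image (fun i => φ (Mvert 𝒬 a i)) Finset.univ := by
      rw [MEdge, Finset.image_image]
      rfl
    rw [himg]
  set NI : Finset (MVertex k 𝒬 → Fin n) :=
    Finset.univ.filter (fun φ : MVertex k 𝒬 → Fin n => ¬ Function.Injective φ) with hNI
  have hnoninj : (NI.card : ℝ) ≤ (V:ℝ)^2 * (n:ℝ)^(V-1) := by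
    have h1 := card_noninj_le (MVertex k 𝒬) n NI
      (fun f hf => (Finset.mem_filter.mp hf).2)
    rw [← hV] at h1
    exact_mod_cast h1
  set T : ℝ := (∑ φ : MVertex k 𝒬 → Fin n, F φ) with hT
  have hB : (∑ φ ∈ Finset.univ.filter (fun φ : MVertex k 𝒬 → Fin n => Function.Injective φ),
      F φ) ≤ T + (V:ℝ)^2 * (n:ℝ)^(V-1) := by
    have hsplit := Finset.sum_filter_add_sum_filter_not Finset.univ
      (fun φ : MVertex k 𝒬 → Fin n => Function.Injective φ) F
    have habs : |∑ φ ∈ NI, F φ| ≤ (V:ℝ)^2 * (n:ℝ)^(V-1) := by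
      calc |∑ φ ∈ NI, F φ|
          ≤ ∑ φ ∈ NI, |F φ| := Finset.abs_sum_le_sum_abs _ _
        _ ≤ ∑ _φ ∈ NI, (1:ℝ) := Finset.sum_le_sum (fun φ _ => hFabs φ)
        _ = (NI.card : ℝ) := by rw [Finset.sum_const, nsmul_eq_mul, mul_one]
        _ ≤ (V:ℝ)^2 * (n:ℝ)^(V-1) := hnoninj
    have h2 := neg_abs_le (∑ φ ∈ NI, F φ)
    rw [hNI] at *
    linarith
  have hTeq : T = ∑ ψ : PsiT k 𝒬 → Fin n, ∑ v : Fin k → Fin n,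
      ∏ a : {Q : Finset (Fin k) // Q ∈ 𝒬} → Bool, g (tup 𝒬 a ψ v) := by
    rw [hT, ← Equiv.sum_comp (phiEquiv k n 𝒬) F, Fintype.sum_prod_type]
    apply Finset.sum_congr rfl
    intro ψ _
    apply Finset.sum_congr rfl
    intro v _
    rw [hF]
    dsimp only
    apply Finset.prod_congr rfl
    intro a _
    congr 1
    funext i
    exact phiEquiv_Mvert 𝒬 a ψ v i
  set a₀ : {Q : Finset (Fin k) // Q ∈ 𝒬} → Bool := (fun _ => false) with ha₀
  set Qa : ({Q : Finset (Fin k) // Q ∈ 𝒬} → Bool) → Finset (Fin k) :=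
    fun a => if h : ∃ p : {Q : Finset (Fin k) // Q ∈ 𝒬}, a p = true
      then h.choose.1 else ∅ with hQa
  have hQa_prop : ∀ a : {Q : Finset (Fin k) // Q ∈ 𝒬} → Bool, a ≠ a₀ →
      Qa a ∈ 𝒬 ∧ ∀ i : Fin k, i ∉ Qa a →
        (fun Q : {Q : Finset (Fin k) // Q ∈ 𝒬 ∧ i ∉ Q} => a ⟨Q.1, Q.2.1⟩) ≠
          (fun _ => false) := by
    intro a ha
    have hex : ∃ p : {Q : Finset (Fin k) // Q ∈ 𝒬}, a p = true := by
      rcases Function.ne_iff.mp ha with ⟨p, hp⟩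
      refine ⟨p, ?_⟩
      rw [ha₀] at hp
      revert hp
      cases a p <;> simp
    have hq : Qa a = hex.choose.1 := dif_pos hex
    refine ⟨by rw [hq]; exact hex.choose.2, ?_⟩
    intro i hi hfun
    rw [hq] at hi
    have h1 : a ⟨hex.choose.1, hex.choose.2⟩ = false :=
      congrFun hfun ⟨hex.choose.1, ⟨hex.choose.2, hi⟩⟩
    have h2 : a hex.choose = true := hex.choose_spec
    rw [show (⟨hex.choose.1, hex.choose.2⟩ : {Q : Finset (Fin k) // Q ∈ 𝒬}) = hex.choose
      from rfl] at h1
    rw [h1] at h2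
    exact Bool.false_ne_true h2
  have hInner : ∀ ψ : PsiT k 𝒬 → Fin n,
      |∑ v : Fin k → Fin n, ∏ a : {Q : Finset (Fin k) // Q ∈ 𝒬} → Bool, g (tup 𝒬 a ψ v)| ≤
        C * (ε * (n:ℝ)^k + (k:ℝ)^2 * (n:ℝ)^(k-1)) := by
    intro ψ
    set Er : Finset ({Q : Finset (Fin k) // Q ∈ 𝒬} → Bool) := Finset.univ.erase a₀ with hEr
    have hrw : ∀ v : Fin k → Fin n,
        (∏ a : {Q : Finset (Fin k) // Q ∈ 𝒬} → Bool, g (tup 𝒬 a ψ v)) =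
        g v * ∑ S ∈ Er.powerset,
          (∏ a ∈ S, (if Finset.image (tup 𝒬 a ψ v) Finset.univ ∈ E then (1:ℝ) else 0)) *
            (-d)^((Er \ S).card) := by
      intro v
      rw [← Finset.mul_prod_erase Finset.univ _ (Finset.mem_univ a₀), ← hEr]
      congr 1
      · rw [ha₀, tup_false]
      · calc ∏ a ∈ Er, g (tup 𝒬 a ψ v)
            = ∏ a ∈ Er, ((if Finset.image (tup 𝒬 a ψ v) Finset.univ ∈ E then (1:ℝ) else 0)
                + (-d)) := by
              apply Finset.prod_congr rfl
              intro a _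
              rw [hg]
              ring
          _ = ∑ S ∈ Er.powerset,
              (∏ a ∈ S, (if Finset.image (tup 𝒬 a ψ v) Finset.univ ∈ E then (1:ℝ) else 0)) *
                (-d)^((Er \ S).card) := by
              rw [Finset.prod_add]
              apply Finset.sum_congr rfl
              intro S _
              rw [Finset.prod_const]
    have h2 : (∑ v : Fin k → Fin n, ∏ a : {Q : Finset (Fin k) // Q ∈ 𝒬} → Bool,
        g (tup 𝒬 a ψ v)) = ∑ S ∈ Er.powerset, (-d)^((Er \ S).card) *
          ∑ v : Fin k → Fin n, g v *
            ∏ a ∈ S, (if Finset.image (tup 𝒬 a ψ v) Finset.univ ∈ E then (1:ℝ) else 0) := by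
      calc (∑ v : Fin k → Fin n, ∏ a : {Q : Finset (Fin k) // Q ∈ 𝒬} → Bool,
            g (tup 𝒬 a ψ v))
          = ∑ v : Fin k → Fin n, ∑ S ∈ Er.powerset, g v *
              ((∏ a ∈ S, (if Finset.image (tup 𝒬 a ψ v) Finset.univ ∈ E then (1:ℝ) else 0)) *
                (-d)^((Er \ S).card)) := by
            apply Finset.sum_congr rfl
            intro v _
            rw [hrw v, Finset.mul_sum]
        _ = ∑ S ∈ Er.powerset, ∑ v : Fin k → Fin n, g v *
              ((∏ a ∈ S, (if Finset.image (tup 𝒬 a ψ v) Finset.univ ∈ E then (1:ℝ) else 0)) *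
                (-d)^((Er \ S).card)) := Finset.sum_comm
        _ = ∑ S ∈ Er.powerset, (-d)^((Er \ S).card) *
              ∑ v : Fin k → Fin n, g v *
                ∏ a ∈ S, (if Finset.image (tup 𝒬 a ψ v) Finset.univ ∈ E then (1:ℝ) else 0) := by
            apply Finset.sum_congr rfl
            intro S _
            rw [Finset.mul_sum]
            apply Finset.sum_congr rfl
            intro v _
            ring
    rw [h2]
    have hS : ∀ S ∈ Er.powerset,
        |(-d)^((Er \ S).card) * ∑ v : Fin k → Fin n, g v *
          ∏ a ∈ S, (if Finset.image (tup 𝒬 a ψ v) Finset.univ ∈ E then (1:ℝ) else 0)| ≤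
          ε * (n:ℝ)^k + (k:ℝ)^2 * (n:ℝ)^(k-1) := by
      intro S hSmem
      have hSsub : S ⊆ Er := Finset.mem_powerset.mp hSmem
      have hane : ∀ a ∈ S, a ≠ a₀ := fun a haS => (Finset.mem_erase.mp (hSsub haS)).1
      have hcore := core_disc_s6 k n 𝒬 d ε hd0 hd1 E hE hDISC S (fun a => tup 𝒬 a ψ) Qa
        (fun a haS => (hQa_prop a (hane a haS)).1)
        (by
          intro a haS v v' hvv'
          funext i
          simp only [tup]
          by_cases h : (fun Q : {Q : Finset (Fin k) // Q ∈ 𝒬 ∧ i ∉ Q} => a ⟨Q.1, Q.2.1⟩) =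
              (fun _ => false)
          · rw [dif_pos h, dif_pos h]
            have hiQ : i ∈ Qa a := by
              by_contra hni
              exact (hQa_prop a (hane a haS)).2 i hni h
            exact congrFun hvv' ⟨i, hiQ⟩
          · rw [dif_neg h, dif_neg h])
      rw [abs_mul]
      calc |(-d)^((Er \ S).card)| * |∑ v : Fin k → Fin n, g v *
            ∏ a ∈ S, (if Finset.image (tup 𝒬 a ψ v) Finset.univ ∈ E then (1:ℝ) else 0)|
          ≤ 1 * (ε * (n:ℝ)^k + (k:ℝ)^2 * (n:ℝ)^(k-1)) := by
            apply mul_le_mul ?_ ?_ (abs_nonneg _) zero_le_one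
            · rw [abs_pow, abs_neg, abs_of_nonneg hd0]
              exact pow_le_one₀ hd0 hd1
            · simp only [hg]
              exact hcore
        _ = ε * (n:ℝ)^k + (k:ℝ)^2 * (n:ℝ)^(k-1) := one_mul _
    calc |∑ S ∈ Er.powerset, (-d)^((Er \ S).card) *
          ∑ v : Fin k → Fin n, g v *
            ∏ a ∈ S, (if Finset.image (tup 𝒬 a ψ v) Finset.univ ∈ E then (1:ℝ) else 0)|
        ≤ ∑ S ∈ Er.powerset, |(-d)^((Er \ S).card) *
          ∑ v : Fin k → Fin n, g v *
            ∏ a ∈ S, (if Finset.image (tup 𝒬 a ψ v) Finset.univ ∈ E then (1:ℝ) else 0)| :=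
          Finset.abs_sum_le_sum_abs _ _
      _ ≤ ∑ _S ∈ Er.powerset, (ε * (n:ℝ)^k + (k:ℝ)^2 * (n:ℝ)^(k-1)) :=
          Finset.sum_le_sum hS
      _ = (Er.powerset.card : ℝ) * (ε * (n:ℝ)^k + (k:ℝ)^2 * (n:ℝ)^(k-1)) := by
          rw [Finset.sum_const, nsmul_eq_mul]
      _ ≤ C * (ε * (n:ℝ)^k + (k:ℝ)^2 * (n:ℝ)^(k-1)) := by
          apply mul_le_mul_of_nonneg_right ?_ (by positivity)
          rw [Finset.card_powerset, hC]
          have hle : Er.card ≤ A := by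
            rw [hEr, hA]
            calc (Finset.univ.erase a₀).card ≤ Finset.univ.card := Finset.card_erase_le
              _ = Fintype.card ({Q : Finset (Fin k) // Q ∈ 𝒬} → Bool) := Finset.card_univ
          calc ((2 ^ Er.card : ℕ) : ℝ) = (2:ℝ) ^ Er.card := by push_cast; ring
            _ ≤ (2:ℝ) ^ A := by
              apply pow_le_pow_right₀ one_le_two hle
  have hTbound : T ≤ (n:ℝ)^cΨ * (C * (ε * (n:ℝ)^k + (k:ℝ)^2 * (n:ℝ)^(k-1))) := by
    rw [hTeq]
    calc (∑ ψ : PsiT k 𝒬 → Fin n, ∑ v : Fin k → Fin n,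
          ∏ a : {Q : Finset (Fin k) // Q ∈ 𝒬} → Bool, g (tup 𝒬 a ψ v))
        ≤ ∑ ψ : PsiT k 𝒬 → Fin n, |∑ v : Fin k → Fin n,
            ∏ a : {Q : Finset (Fin k) // Q ∈ 𝒬} → Bool, g (tup 𝒬 a ψ v)| :=
          Finset.sum_le_sum (fun ψ _ => le_abs_self _)
      _ ≤ ∑ _ψ : PsiT k 𝒬 → Fin n, C * (ε * (n:ℝ)^k + (k:ℝ)^2 * (n:ℝ)^(k-1)) :=
          Finset.sum_le_sum (fun ψ _ => hInner ψ)
      _ = (Fintype.card (PsiT k 𝒬 → Fin n) : ℝ) *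
            (C * (ε * (n:ℝ)^k + (k:ℝ)^2 * (n:ℝ)^(k-1))) := by
          rw [Finset.sum_const, nsmul_eq_mul, Finset.card_univ]
      _ = (n:ℝ)^cΨ * (C * (ε * (n:ℝ)^k + (k:ℝ)^2 * (n:ℝ)^(k-1))) := by
          rw [Fintype.card_fun, Fintype.card_fin, ← hcΨ]
          push_cast
          ring
  have hεC : C * ε = δ / 2 := by
    rw [hε]
    field_simp
  have e1 : (n:ℝ)^cΨ * (n:ℝ)^k = (n:ℝ)^V := by
    rw [← pow_add]
    congr 1
    omega
  have e2 : (n:ℝ)^cΨ * (n:ℝ)^(k-1) = (n:ℝ)^(V-1) := by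
    rw [← pow_add]
    congr 1
    omega
  have hn' : 2 * D / δ ≤ (n:ℝ) := by
    have h1 : ((⌈2 * D / δ⌉₊ : ℕ) : ℝ) ≤ (n:ℝ) := by
      exact_mod_cast le_trans (Nat.le_succ _) hn
    exact le_trans (Nat.le_ceil _) h1
  have hDn : D * (n:ℝ)^(V-1) ≤ (δ/2) * (n:ℝ)^V := by
    have hnpow : (n:ℝ)^V = (n:ℝ) * (n:ℝ)^(V-1) := by
      rw [← pow_succ']
      congr 1
      omega
    have hD2 : D ≤ δ/2 * n := by
      rw [div_le_iff₀ hδ] at hn'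
      linarith
    calc D * (n:ℝ)^(V-1) ≤ (δ/2 * n) * (n:ℝ)^(V-1) :=
          mul_le_mul_of_nonneg_right hD2 (by positivity)
      _ = (δ/2) * (n:ℝ)^V := by rw [hnpow]; ring
  unfold DEV
  show (∑ φ ∈ Finset.univ.filter (fun φ : MVertex k 𝒬 → Fin n => Function.Injective φ),
      ∏ f ∈ MEdges 𝒬, ((if Finset.image φ f ∈ E then (1:ℝ) else 0) - d)) ≤ δ * (n:ℝ)^V
  calc (∑ φ ∈ Finset.univ.filter (fun φ : MVertex k 𝒬 → Fin n => Function.Injective φ),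
        ∏ f ∈ MEdges 𝒬, ((if Finset.image φ f ∈ E then (1:ℝ) else 0) - d))
      = ∑ φ ∈ Finset.univ.filter (fun φ : MVertex k 𝒬 → Fin n => Function.Injective φ),
          F φ := Finset.sum_congr rfl (fun φ _ => hterm φ)
    _ ≤ T + (V:ℝ)^2 * (n:ℝ)^(V-1) := hB
    _ ≤ (n:ℝ)^cΨ * (C * (ε * (n:ℝ)^k + (k:ℝ)^2 * (n:ℝ)^(k-1))) +
          (V:ℝ)^2 * (n:ℝ)^(V-1) := by linarith
    _ = (C * ε) * ((n:ℝ)^cΨ * (n:ℝ)^k) + C * (k:ℝ)^2 * ((n:ℝ)^cΨ * (n:ℝ)^(k-1)) +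
          (V:ℝ)^2 * (n:ℝ)^(V-1) := by ring
    _ = (δ/2) * (n:ℝ)^V + D * (n:ℝ)^(V-1) := by
        rw [e1, e2, hεC, hD]
        ring
    _ ≤ (δ/2) * (n:ℝ)^V + (δ/2) * (n:ℝ)^V := by linarith
    _ = δ * (n:ℝ)^V := by ring
end
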